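/- arXiv:1610.05246 — 7 statements merged into one kernel-verified Lean document; each statement's English description precedes it below -/
import Mathlib

section
/- Let n ≥ 1 be an integer, α ∈ [0,1), and let P₀ denote the uniform probability measure on [0,1]² ⊆ ℝ² (two-dimensional Lebesgue measure restricted to the unit square). Let C ⊆ (ℝ²)^n be a Borel set such that the n-fold product measure P₀^{⊗n} assigns measure 0 to the topological frontier of C and P₀^{⊗n}(C) ≤ α. Then for every ε > 0 there exists a Borel probability measure F on ℝ², supported in [0,1]², whose pushforwards under the two coordinate projections (x,y) ↦ x and (x,y) ↦ y both equal the uniform distribution on [0,1], which is mutually singular with respect to P₀ (hence at total-variation distance 1 from P₀, so F is a valid alternative with TV(F,P₀) ≥ δ for every δ ∈ (0,1]), and such that F^{⊗n}(C) ≤ α + ε. -/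
open MeasureTheory
open scoped ENNReal

/-- `P₀`: the uniform probability measure on the unit square `[0,1]² ⊆ ℝ²`
(two-dimensional Lebesgue measure restricted to the unit square). -/
noncomputable abbrev unifSquare : Measure (ℝ × ℝ) :=
  volume.restrict (Set.Icc (0 : ℝ) 1 ×ˢ Set.Icc (0 : ℝ) 1)

open Set

noncomputable def phiMap (m : ℕ) : ℝ → ℝ × ℝ := fun x => (x, Int.fract (m * x))

lemma phiMap_measurable (m : ℕ) : Measurable (phiMap m) :=
  measurable_id.prodMk (measurable_fract.comp (measurable_const.mul measurable_id))

noncomputable def Fsing (m : ℕ) : Measure (ℝ × ℝ) :=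
  Measure.map (phiMap m) (volume.restrict (Icc 0 1))

instance : IsProbabilityMeasure (volume.restrict (Icc (0:ℝ) 1)) :=
  ⟨by simp [Real.volume_Icc]⟩

instance (m : ℕ) : IsProbabilityMeasure (Fsing m) :=
  Measure.isProbabilityMeasure_map (phiMap_measurable m).aemeasurable

lemma Fsing_compl_square (m : ℕ) :
    Fsing m ((Set.Icc (0 : ℝ) 1 ×ˢ Set.Icc (0 : ℝ) 1)ᶜ) = 0 := by
  rw [Fsing, Measure.map_apply (phiMap_measurable m)
    ((measurableSet_Icc.prod measurableSet_Icc)).compl,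
    Measure.restrict_apply (((phiMap_measurable m) (measurableSet_Icc.prod measurableSet_Icc).compl))]
  convert measure_empty (μ := (volume : Measure ℝ))
  ext x
  simp only [mem_inter_iff, mem_preimage, mem_compl_iff, mem_prod, phiMap, mem_Icc,
    mem_empty_iff_false, iff_false, not_and]
  intro h hx hx2
  exact h ⟨hx, hx2⟩ (Int.fract_nonneg _) (Int.fract_lt_one _).le

lemma Fsing_fst (m : ℕ) :
    (Fsing m).map Prod.fst = volume.restrict (Set.Icc (0 : ℝ) 1) := by
  rw [Fsing, Measure.map_map measurable_fst (phiMap_measurable m)]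
  have : (Prod.fst ∘ phiMap m) = id := rfl
  rw [this, Measure.map_id]

lemma Fsing_singular (m : ℕ) : Fsing m ⟂ₘ unifSquare := by
  set S : Set (ℝ × ℝ) := {p | p.2 = Int.fract (m * p.1)} with hS
  have hSmeas : MeasurableSet S :=
    measurableSet_eq_fun measurable_snd
      (measurable_fract.comp (measurable_const.mul measurable_fst))
  refine ⟨Sᶜ, hSmeas.compl, ?_, ?_⟩
  · rw [Fsing, Measure.map_apply (phiMap_measurable m) hSmeas.compl]
    convert measure_empty (μ := (volume.restrict (Icc (0:ℝ) 1)))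
    ext x
    simp [phiMap, hS]
  · rw [compl_compl]
    have hvol : (volume : Measure (ℝ × ℝ)) S = 0 := by
      rw [Measure.volume_eq_prod, Measure.prod_apply hSmeas]
      have : ∀ x : ℝ, (Prod.mk x ⁻¹' S) = {Int.fract (m * x)} := by
        intro x; ext y; simp [hS]
      simp [this]
    exact le_antisymm (le_trans (Measure.restrict_apply_le _ _) hvol.le) zero_le

lemma fract_eq_of_mem (r : ℝ) (i : ℕ) (h1 : (i:ℝ) ≤ r) (h2 : r < i + 1) :
    Int.fract r = r - i := by
  have hfl : ⌊r⌋ = (i:ℤ) := by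
    rw [Int.floor_eq_iff]
    exact ⟨by exact_mod_cast h1, by push_cast; exact_mod_cast h2⟩
  simp [Int.fract, hfl]

lemma Fsing_snd (m : ℕ) (hm : 1 ≤ m) :
    (Fsing m).map Prod.snd = volume.restrict (Set.Icc (0 : ℝ) 1) := by
  have hmpos : (0:ℝ) < m := by exact_mod_cast hm
  rw [Fsing, Measure.map_map measurable_snd (phiMap_measurable m)]
  have hcomp : (Prod.snd ∘ phiMap m) = fun x : ℝ => Int.fract (m * x) := rfl
  rw [hcomp]
  have hmeas : Measurable fun x : ℝ => Int.fract ((m:ℝ) * x) :=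
    measurable_fract.comp (measurable_const.mul measurable_id)
  haveI : IsProbabilityMeasure ((volume.restrict (Icc (0:ℝ) 1)).map
      fun x : ℝ => Int.fract (m * x)) := Measure.isProbabilityMeasure_map hmeas.aemeasurable
  refine Measure.ext_of_Iic _ _ fun a => ?_
  rw [Measure.map_apply hmeas measurableSet_Iic,
    Measure.restrict_apply (hmeas measurableSet_Iic),
    Measure.restrict_apply measurableSet_Iic]
  rcases lt_or_ge a 0 with ha0 | ha0
  · have h1 : (fun x : ℝ => Int.fract (m * x)) ⁻¹' Iic a ∩ Icc 0 1 = ∅ := by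
      ext x
      simp only [mem_inter_iff, mem_preimage, mem_Iic, mem_empty_iff_false, iff_false, not_and]
      intro hf
      exact absurd (le_trans (Int.fract_nonneg _) hf) (not_le.2 ha0)
    have h2 : Iic a ∩ Icc (0:ℝ) 1 = ∅ := by
      ext x
      simp only [mem_inter_iff, mem_Iic, mem_Icc, mem_empty_iff_false, iff_false, not_and]
      intro hf h0 _
      exact absurd (le_trans h0 hf) (not_le.2 ha0)
    rw [h1, h2]
  rcases le_or_gt 1 a with ha1 | ha1
  · have h1 : (fun x : ℝ => Int.fract (m * x)) ⁻¹' Iic a ∩ Icc 0 1 = Icc 0 1 := by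
      refine inter_eq_right.2 fun x _ => ?_
      exact le_trans (Int.fract_lt_one _).le ha1
    have h2 : Iic a ∩ Icc (0:ℝ) 1 = Icc 0 1 :=
      inter_eq_right.2 fun x hx => le_trans hx.2 ha1
    rw [h1, h2]
  -- main case 0 ≤ a < 1
  have hset : (fun x : ℝ => Int.fract (m * x)) ⁻¹' Iic a ∩ Icc 0 1
      = (⋃ i ∈ Finset.range m, Icc ((i:ℝ)/m) ((i+a)/m)) ∪ {1} := by
    ext x
    simp only [mem_inter_iff, mem_preimage, mem_Iic, mem_Icc, mem_union, mem_singleton_iff,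
      Set.mem_iUnion, Finset.mem_range, exists_prop]
    constructor
    · rintro ⟨hf, hx0, hx1⟩
      rcases eq_or_lt_of_le hx1 with h1 | h1
      · exact Or.inr h1
      · left
        set i : ℕ := ⌊(m:ℝ)*x⌋.toNat with hi
        have hfl0 : (0:ℤ) ≤ ⌊(m:ℝ)*x⌋ := Int.floor_nonneg.2 (by positivity)
        have hic : (i:ℝ) = (⌊(m:ℝ)*x⌋ : ℤ) := by
          rw [hi]; exact_mod_cast congrArg (fun z : ℤ => (z : ℝ)) (Int.toNat_of_nonneg hfl0)
        have hile : (i:ℝ) ≤ m*x := by rw [hic]; exact Int.floor_le _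
        have hilt : (m:ℝ)*x < i + 1 := by rw [hic]; exact Int.lt_floor_add_one _
        have hfr : Int.fract ((m:ℝ)*x) = m*x - i := fract_eq_of_mem _ _ hile hilt
        rw [hfr] at hf
        refine ⟨i, ?_, ?_, ?_⟩
        · have : (i:ℝ) < m := lt_of_le_of_lt hile (by nlinarith)
          exact_mod_cast this
        · rw [div_le_iff₀ hmpos]; linarith
        · rw [le_div_iff₀ hmpos]; linarith
    · rintro (⟨i, him, hxl, hxr⟩ | rfl)
      · have h1m : (i:ℝ) + 1 ≤ m := by exact_mod_cast Nat.succ_le_of_lt him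
        have hx0 : (0:ℝ) ≤ x := le_trans (by positivity) hxl
        have hxi : (i:ℝ) ≤ m*x := by rw [div_le_iff₀ hmpos] at hxl; linarith
        have hxa : (m:ℝ)*x ≤ i + a := by rw [le_div_iff₀ hmpos] at hxr; linarith
        have hfr : Int.fract ((m:ℝ)*x) = m*x - i :=
          fract_eq_of_mem _ _ hxi (by linarith)
        refine ⟨by rw [hfr]; linarith, hx0, ?_⟩
        have : (m:ℝ)*x ≤ m := by linarith
        calc x = m*x/m := by field_simp
        _ ≤ m/m := by gcongr
        _ = 1 := by field_simp
      · refine ⟨?_, zero_le_one, le_refl _⟩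
        rw [mul_one]
        simpa using ha0
  rw [hset]
  have hnull : volume ({(1:ℝ)} : Set ℝ) = 0 := Real.volume_singleton
  have hdisj : (↑(Finset.range m) : Set ℕ).PairwiseDisjoint
      (fun i : ℕ => Icc ((i:ℝ)/m) ((i+a)/m)) := by
    intro i _ j _ hij
    have key : ∀ i j : ℕ, i < j → Disjoint (Icc ((i:ℝ)/m) ((i+a)/m)) (Icc ((j:ℝ)/m) ((j+a)/m)) := by
      intro i j h
      have hij' : (i:ℝ) + 1 ≤ j := by exact_mod_cast Nat.succ_le_of_lt h
      apply Set.disjoint_left.2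
      rintro x ⟨_, hx2⟩ ⟨hx3, _⟩
      have hlt : ((i:ℝ)+a)/m < (j:ℝ)/m := by
        gcongr
        linarith
      linarith [le_trans hx2 hlt.le]
    rcases lt_or_gt_of_ne hij with h | h
    · exact key _ _ h
    · exact (key _ _ h).symm
  have hA : volume (⋃ i ∈ Finset.range m, Icc ((i:ℝ)/m) ((i+a)/m)) = ENNReal.ofReal a := by
    rw [measure_biUnion_finset hdisj (fun i _ => measurableSet_Icc)]
    have heq : ∀ i ∈ Finset.range m,
        volume (Icc ((i:ℝ)/m) ((i+a)/m)) = ENNReal.ofReal (a/m) := by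
      intro i _
      rw [Real.volume_Icc]
      congr 1
      field_simp
      ring
    rw [Finset.sum_congr rfl heq, Finset.sum_const, Finset.card_range, nsmul_eq_mul,
      ← ENNReal.ofReal_natCast m, ← ENNReal.ofReal_mul (by positivity)]
    congr 1
    field_simp
  have hIic : Iic a ∩ Icc (0:ℝ) 1 = Icc 0 a := by
    ext x
    simp only [mem_inter_iff, mem_Iic, mem_Icc]
    constructor
    · rintro ⟨h1, h2, _⟩; exact ⟨h2, h1⟩
    · rintro ⟨h1, h2⟩; exact ⟨h2, h1, le_trans h2 ha1.le⟩
  rw [hIic, Real.volume_Icc]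
  refine le_antisymm ?_ ?_
  · refine le_trans (measure_union_le _ _) ?_
    rw [hA, hnull, add_zero, sub_zero]
  · rw [sub_zero, ← hA]
    exact measure_mono subset_union_left

def cell (m i : ℕ) : Set ℝ := Ico ((i:ℝ)/m) (((i:ℝ)+1)/m)

lemma cell_subset (m i : ℕ) (hm : 1 ≤ m) (hi : i < m) : cell m i ⊆ Icc (0:ℝ) 1 := by
  have hmpos : (0:ℝ) < m := by exact_mod_cast hm
  have him : (i:ℝ) + 1 ≤ m := by exact_mod_cast Nat.succ_le_of_lt hi
  rintro x ⟨hx1, hx2⟩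
  constructor
  · exact le_trans (by positivity) hx1
  · calc x ≤ ((i:ℝ)+1)/m := hx2.le
      _ ≤ (m:ℝ)/m := by gcongr
      _ = 1 := by field_simp

lemma cell_disjoint (m : ℕ) (hm : 1 ≤ m) {i j : ℕ} (hij : i ≠ j) :
    Disjoint (cell m i) (cell m j) := by
  have hmpos : (0:ℝ) < m := by exact_mod_cast hm
  have key : ∀ i j : ℕ, i < j → Disjoint (cell m i) (cell m j) := by
    intro i j h
    have h1 : (i:ℝ) + 1 ≤ j := by exact_mod_cast Nat.succ_le_of_lt h
    apply Set.disjoint_left.2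
    rintro x ⟨_, hx2⟩ ⟨hx3, _⟩
    have : ((i:ℝ)+1)/m ≤ (j:ℝ)/m := by gcongr
    linarith
  rcases lt_or_gt_of_ne hij with h | h
  · exact key _ _ h
  · exact (key _ _ h).symm

lemma mem_cell_of_mem_Icc (m : ℕ) (hm : 1 ≤ m) {x : ℝ} (hx : x ∈ Icc (0:ℝ) 1) :
    ∃ i : ℕ, i ≤ m ∧ x ∈ cell m i := by
  have hmpos : (0:ℝ) < m := by exact_mod_cast hm
  have hfl0 : (0:ℤ) ≤ ⌊(m:ℝ)*x⌋ := Int.floor_nonneg.2 (by nlinarith [hx.1])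
  have hic : ((⌊(m:ℝ)*x⌋.toNat : ℕ) : ℝ) = (⌊(m:ℝ)*x⌋ : ℤ) := by
    exact_mod_cast congrArg (fun z : ℤ => (z : ℝ)) (Int.toNat_of_nonneg hfl0)
  refine ⟨⌊(m:ℝ)*x⌋.toNat, ?_, ?_, ?_⟩
  · have hfl : (⌊(m:ℝ)*x⌋ : ℝ) ≤ m := le_trans (Int.floor_le _) (by nlinarith [hx.1, hx.2])
    have h2 : ⌊(m:ℝ)*x⌋ ≤ (m:ℤ) := by exact_mod_cast hfl
    omega
  · rw [div_le_iff₀ hmpos, hic]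
    have := Int.floor_le ((m:ℝ)*x)
    linarith
  · rw [lt_div_iff₀ hmpos, hic]
    have := Int.lt_floor_add_one ((m:ℝ)*x)
    linarith

lemma Fsing_cell (m : ℕ) (hm : 1 ≤ m) (i j : ℕ) (hi : i ≤ m) (hj : j ≤ m) :
    Fsing m (cell m i ×ˢ cell m j) = unifSquare (cell m i ×ˢ cell m j) := by
  have hmpos : (0:ℝ) < m := by exact_mod_cast hm
  have hmeasc : MeasurableSet (cell m i ×ˢ cell m j) := measurableSet_Ico.prod measurableSet_Ico
  rw [Fsing, Measure.map_apply (phiMap_measurable m) hmeasc,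
    Measure.restrict_apply ((phiMap_measurable m) hmeasc),
    Measure.restrict_apply hmeasc]
  rcases Nat.lt_or_ge i m with him | him
  · rcases Nat.lt_or_ge j m with hjm | hjm
    · -- main case i < m, j < m
      have hjm' : (j:ℝ) + 1 ≤ m := by exact_mod_cast Nat.succ_le_of_lt hjm
      have him' : (i:ℝ) + 1 ≤ m := by exact_mod_cast Nat.succ_le_of_lt him
      have hb : phiMap m ⁻¹' (cell m i ×ˢ cell m j) ∩ Icc 0 1
          = Ico (((i:ℝ)*m + j)/(m^2)) (((i:ℝ)*m + j + 1)/(m^2)) := by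
        have hm2 : (0:ℝ) < (m:ℝ)^2 := by positivity
        ext x
        simp only [phiMap, mem_inter_iff, mem_preimage, mem_prod, cell, mem_Ico, mem_Icc]
        constructor
        · rintro ⟨⟨⟨hx1, hx2⟩, hf1, hf2⟩, _, _⟩
          have hxi : (i:ℝ) ≤ m*x := by rw [div_le_iff₀ hmpos] at hx1; linarith
          have hxi2 : (m:ℝ)*x < i+1 := by rw [lt_div_iff₀ hmpos] at hx2; linarith
          have hfr : Int.fract ((m:ℝ)*x) = m*x - i := fract_eq_of_mem _ i hxi hxi2
          rw [hfr, div_le_iff₀ hmpos] at hf1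
          rw [hfr, lt_div_iff₀ hmpos] at hf2
          constructor
          · rw [div_le_iff₀ hm2]; nlinarith
          · rw [lt_div_iff₀ hm2]; nlinarith
        · rintro ⟨hb1, hb2⟩
          rw [div_le_iff₀ hm2] at hb1
          rw [lt_div_iff₀ hm2] at hb2
          have hj0 : (0:ℝ) ≤ j := by positivity
          have hi0 : (0:ℝ) ≤ i := by positivity
          have hxi : (i:ℝ) ≤ m*x := by nlinarith
          have hxi2 : (m:ℝ)*x < i+1 := by nlinarith
          have hfr : Int.fract ((m:ℝ)*x) = m*x - i := fract_eq_of_mem _ i hxi hxi2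
          refine ⟨⟨⟨?_, ?_⟩, ?_, ?_⟩, ?_, ?_⟩
          · rw [div_le_iff₀ hmpos]; nlinarith
          · rw [lt_div_iff₀ hmpos]; nlinarith
          · rw [hfr, div_le_iff₀ hmpos]; nlinarith
          · rw [hfr, lt_div_iff₀ hmpos]; nlinarith
          · nlinarith
          · nlinarith
      have hprod : cell m i ×ˢ cell m j ∩ Icc (0:ℝ) 1 ×ˢ Icc (0:ℝ) 1
          = cell m i ×ˢ cell m j := by
        refine inter_eq_left.2 ?_
        exact Set.prod_mono (cell_subset m i hm him) (cell_subset m j hm hjm)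
      have hc : ∀ k:ℕ, ((k:ℝ)+1)/m - k/m = 1/m := by intro k; field_simp; ring
      rw [hb, hprod, Real.volume_Ico, Measure.volume_eq_prod, Measure.prod_prod,
        cell, cell, Real.volume_Ico, Real.volume_Ico, hc, hc,
        ← ENNReal.ofReal_mul (by positivity)]
      congr 1
      field_simp
      ring
    · -- j = m : both sides zero
      have hjeq : (j:ℝ) = m := by exact_mod_cast le_antisymm hj hjm
      have h1 : phiMap m ⁻¹' (cell m i ×ˢ cell m j) ∩ Icc 0 1 = ∅ := by
        ext x
        simp only [phiMap, mem_inter_iff, mem_preimage, mem_prod, cell, mem_Ico, mem_Icc,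
          mem_empty_iff_false, iff_false, not_and]
        rintro ⟨_, hf1, _⟩
        have : ((j:ℝ))/m = 1 := by rw [hjeq]; field_simp
        rw [this] at hf1
        exact absurd (lt_of_le_of_lt hf1 (Int.fract_lt_one _)) (lt_irrefl 1)
      rw [h1, measure_empty]
      symm
      have h2 : cell m i ×ˢ cell m j ∩ Icc (0:ℝ) 1 ×ˢ Icc (0:ℝ) 1
          ⊆ (univ : Set ℝ) ×ˢ ({1} : Set ℝ) := by
        rintro ⟨x, y⟩ ⟨⟨_, hy1, hy2⟩, _, _, hyle⟩
        have hj1 : (1:ℝ) ≤ y := by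
          have : ((j:ℝ))/m = 1 := by rw [hjeq]; field_simp
          rw [this] at hy1; exact hy1
        exact ⟨trivial, le_antisymm hyle hj1⟩
      refine le_antisymm (le_trans (measure_mono h2) ?_) zero_le
      rw [Measure.volume_eq_prod, Measure.prod_prod, Real.volume_singleton, mul_zero]
  · -- i = m : both sides zero
    have hieq : (i:ℝ) = m := by exact_mod_cast le_antisymm hi him
    have hone : ((i:ℝ))/m = 1 := by rw [hieq]; field_simp
    have h1 : phiMap m ⁻¹' (cell m i ×ˢ cell m j) ∩ Icc 0 1 ⊆ ({1} : Set ℝ) := by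
      rintro x ⟨⟨⟨hx1, _⟩, _⟩, _, hxle⟩
      rw [hone] at hx1
      exact le_antisymm hxle hx1
    have h2 : cell m i ×ˢ cell m j ∩ Icc (0:ℝ) 1 ×ˢ Icc (0:ℝ) 1
        ⊆ ({1} : Set ℝ) ×ˢ (univ : Set ℝ) := by
      rintro ⟨x, y⟩ ⟨⟨hx1, _⟩, ⟨_, hxle⟩, _⟩
      rw [cell, mem_Ico, hone] at hx1
      exact ⟨le_antisymm hxle hx1.1, trivial⟩
    have e1 : volume (phiMap m ⁻¹' (cell m i ×ˢ cell m j) ∩ Icc 0 1) = 0 :=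
      le_antisymm (le_trans (measure_mono h1) (by rw [Real.volume_singleton])) zero_le
    have e2 : volume (cell m i ×ˢ cell m j ∩ Icc (0:ℝ) 1 ×ˢ Icc (0:ℝ) 1) = 0 := by
      refine le_antisymm (le_trans (measure_mono h2) ?_) zero_le
      rw [Measure.volume_eq_prod, Measure.prod_prod, Real.volume_singleton, zero_mul]
    rw [e1, e2]

instance : IsProbabilityMeasure unifSquare :=
  ⟨by rw [Measure.restrict_apply_univ, Measure.volume_eq_prod, Measure.prod_prod,
      Real.volume_Icc]; norm_num⟩

/-- Non-existence of a uniformly consistent test of independence: for any level-`α`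
critical region `C` for `n` i.i.d. observations whose frontier is `P₀^⊗n`-null, and any
`ε > 0`, there is a probability measure `F` on `ℝ²`, supported in `[0,1]²`, with both
marginals uniform on `[0,1]`, mutually singular with respect to `P₀` (hence at
total-variation distance 1 from `P₀`), such that `F^⊗n(C) ≤ α + ε`. -/
theorem no_uniformly_consistent_independence_test
    (n : ℕ) (hn : 1 ≤ n) (α : ℝ≥0∞) (hα : α < 1)
    (C : Set (Fin n → ℝ × ℝ)) (hC : MeasurableSet C)
    (hfrontier : Measure.pi (fun _ : Fin n => unifSquare) (frontier C) = 0)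
    (hlevel : Measure.pi (fun _ : Fin n => unifSquare) C ≤ α) :
    ∀ ε : ℝ≥0∞, 0 < ε →
      ∃ F : ProbabilityMeasure (ℝ × ℝ),
        (F : Measure (ℝ × ℝ)) ((Set.Icc (0 : ℝ) 1 ×ˢ Set.Icc (0 : ℝ) 1)ᶜ) = 0 ∧
        (F : Measure (ℝ × ℝ)).map Prod.fst = volume.restrict (Set.Icc (0 : ℝ) 1) ∧
        (F : Measure (ℝ × ℝ)).map Prod.snd = volume.restrict (Set.Icc (0 : ℝ) 1) ∧
        (F : Measure (ℝ × ℝ)) ⟂ₘ unifSquare ∧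
        Measure.pi (fun _ : Fin n => (F : Measure (ℝ × ℝ))) C ≤ α + ε := by
  intro ε hε
  classical
  set P : Measure (Fin n → ℝ × ℝ) := Measure.pi (fun _ => unifSquare) with hP
  set Sq : Set (Fin n → ℝ × ℝ) := Set.univ.pi (fun _ => Set.Icc (0:ℝ) 1 ×ˢ Set.Icc (0:ℝ) 1)
    with hSq
  have hSqMeas : MeasurableSet Sq :=
    MeasurableSet.univ_pi fun _ => measurableSet_Icc.prod measurableSet_Icc
  have hSqComp : IsCompact Sq := isCompact_univ_pi fun _ => isCompact_Icc.prod isCompact_Icc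
  set K := closure C ∩ Sq with hK
  have hKcomp : IsCompact K := hSqComp.inter_left isClosed_closure
  have hPK : P K ≤ α := by
    calc P K ≤ P (closure C) := measure_mono inter_subset_left
    _ ≤ P C + P (frontier C) := by
        rw [closure_eq_self_union_frontier]; exact measure_union_le _ _
    _ ≤ α := by rw [hfrontier, add_zero]; exact hlevel
  have hαtop : α ≠ ⊤ := ne_top_of_lt hα
  obtain ⟨U, hKU, hUopen, hPU⟩ := Set.exists_isOpen_lt_of_lt K (α + ε)
    (lt_of_le_of_lt hPK (ENNReal.lt_add_right hαtop hε.ne'))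
  obtain ⟨δ, hδ, hthick⟩ := hKcomp.exists_thickening_subset_open hUopen hKU
  obtain ⟨m', hm'⟩ := exists_nat_one_div_lt hδ
  set m := m' + 1 with hmdef
  have hm : 1 ≤ m := Nat.le_add_left 1 m'
  have hminv : (1:ℝ)/m < δ := by rw [hmdef]; push_cast; exact hm'
  refine ⟨⟨Fsing m, inferInstance⟩, Fsing_compl_square m, Fsing_fst m, Fsing_snd m hm,
    Fsing_singular m, ?_⟩
  show Measure.pi (fun _ : Fin n => Fsing m) C ≤ α + ε
  set Q : Measure (Fin n → ℝ × ℝ) := Measure.pi (fun _ => Fsing m) with hQ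
  have hQcompl : Q Sqᶜ = 0 := by
    have hsq1 : Fsing m (Set.Icc (0:ℝ) 1 ×ˢ Set.Icc (0:ℝ) 1) = 1 := by
      have h := measure_add_measure_compl (μ := Fsing m)
        (s := Set.Icc (0:ℝ) 1 ×ˢ Set.Icc (0:ℝ) 1) (measurableSet_Icc.prod measurableSet_Icc)
      rw [Fsing_compl_square m, add_zero, measure_univ] at h
      exact h
    have h1 : Q Sq = 1 := by
      rw [hQ, hSq, Measure.pi_pi]
      simp only [hsq1, Finset.prod_const, one_pow]
    rw [measure_compl hSqMeas (measure_ne_top _ _), h1, measure_univ, tsub_self]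
  set box : (Fin n → Fin (m+1) × Fin (m+1)) → Set (Fin n → ℝ × ℝ) :=
    fun f => Set.univ.pi fun k => cell m (f k).1 ×ˢ cell m (f k).2 with hbox
  have hboxMeas : ∀ f, MeasurableSet (box f) := fun f =>
    MeasurableSet.univ_pi fun k => measurableSet_Ico.prod measurableSet_Ico
  set I : Finset (Fin n → Fin (m+1) × Fin (m+1)) :=
    Finset.univ.filter fun f => (box f ∩ K).Nonempty with hI
  have hcover : K ⊆ ⋃ f ∈ I, box f := by
    intro p hp
    have hpSq : p ∈ Sq := hp.2
    have hchoice : ∀ k, ∃ ij : Fin (m+1) × Fin (m+1),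
        (p k).1 ∈ cell m ij.1 ∧ (p k).2 ∈ cell m ij.2 := by
      intro k
      have h1 : p k ∈ Set.Icc (0:ℝ) 1 ×ˢ Set.Icc (0:ℝ) 1 := hpSq k (Set.mem_univ k)
      obtain ⟨i, hi, hmemi⟩ := mem_cell_of_mem_Icc m hm h1.1
      obtain ⟨j, hj, hmemj⟩ := mem_cell_of_mem_Icc m hm h1.2
      exact ⟨(⟨i, Nat.lt_succ_of_le hi⟩, ⟨j, Nat.lt_succ_of_le hj⟩), hmemi, hmemj⟩
    choose f hf using hchoice
    have hpbox : p ∈ box f := fun k _ => ⟨(hf k).1, (hf k).2⟩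
    have hfI : f ∈ I := by
      rw [hI]
      exact Finset.mem_filter.2 ⟨Finset.mem_univ _, ⟨p, hpbox, hp⟩⟩
    exact Set.mem_iUnion₂.2 ⟨f, hfI, hpbox⟩
  have hboxU : ∀ f ∈ I, box f ⊆ U := by
    intro f hf q hq
    rw [hI, Finset.mem_filter] at hf
    obtain ⟨p, hpbox, hpK⟩ := hf.2
    apply hthick
    rw [Metric.mem_thickening_iff]
    refine ⟨p, hpK, ?_⟩
    rw [dist_pi_lt_iff hδ]
    intro k
    have hqk := hq k (Set.mem_univ k)
    have hpk := hpbox k (Set.mem_univ k)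
    have hcelldist : ∀ (i : ℕ) (x y : ℝ), x ∈ cell m i → y ∈ cell m i → dist x y < 1/m := by
      intro i x y hx hy
      have hmpos : (0:ℝ) < m := by exact_mod_cast hm
      rw [Real.dist_eq, abs_sub_lt_iff]
      have hkey : ((i:ℝ)+1)/m - (i:ℝ)/m = 1/m := by field_simp; ring
      obtain ⟨hx1, hx2⟩ := hx
      obtain ⟨hy1, hy2⟩ := hy
      constructor <;> linarith
    have h1 : dist (q k).1 (p k).1 < 1/m := hcelldist _ _ _ hqk.1 hpk.1
    have h2 : dist (q k).2 (p k).2 < 1/m := hcelldist _ _ _ hqk.2 hpk.2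
    rw [Prod.dist_eq]
    exact lt_trans (max_lt h1 h2) hminv
  have hdisjbox : (↑I : Set (Fin n → Fin (m+1) × Fin (m+1))).PairwiseDisjoint box := by
    intro f _ g _ hfg
    obtain ⟨k, hk⟩ : ∃ k, f k ≠ g k := by
      by_contra h; push_neg at h; exact hfg (funext h)
    apply Set.disjoint_left.2
    intro q hqf hqg
    have h1 := hqf k (Set.mem_univ k)
    have h2 := hqg k (Set.mem_univ k)
    have hcases : (f k).1 ≠ (g k).1 ∨ (f k).2 ≠ (g k).2 := by
      by_contra h; push_neg at h; exact hk (Prod.ext h.1 h.2)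
    rcases hcases with h | h
    · exact Set.disjoint_left.1 (cell_disjoint m hm fun hc => h (Fin.ext hc)) h1.1 h2.1
    · exact Set.disjoint_left.1 (cell_disjoint m hm fun hc => h (Fin.ext hc)) h1.2 h2.2
  have hQbox : ∀ f, Q (box f) = P (box f) := by
    intro f
    rw [hQ, hP, hbox]
    rw [Measure.pi_pi, Measure.pi_pi]
    exact Finset.prod_congr rfl fun k _ =>
      Fsing_cell m hm _ _ (Nat.lt_succ_iff.1 (f k).1.isLt) (Nat.lt_succ_iff.1 (f k).2.isLt)
  have hCsub : C ⊆ K ∪ Sqᶜ := by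
    intro p hp
    by_cases h : p ∈ Sq
    · exact Or.inl ⟨subset_closure hp, h⟩
    · exact Or.inr h
  calc Q C ≤ Q (K ∪ Sqᶜ) := measure_mono hCsub
  _ ≤ Q K + Q Sqᶜ := measure_union_le _ _
  _ = Q K := by rw [hQcompl, add_zero]
  _ ≤ Q (⋃ f ∈ I, box f) := measure_mono hcover
  _ ≤ ∑ f ∈ I, Q (box f) := measure_biUnion_finset_le _ _
  _ = ∑ f ∈ I, P (box f) := Finset.sum_congr rfl fun f _ => hQbox f
  _ = P (⋃ f ∈ I, box f) := (measure_biUnion_finset hdisjbox fun f _ => hboxMeas f).symm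
  _ ≤ P U := measure_mono (Set.iUnion₂_subset hboxU)
  _ ≤ α + ε := hPU.le
end

section
/- For every integer d ≥ 1, the pushforward of the measure μ_d under the first coordinate projection (x,y) ↦ x equals the uniform distribution on [0,1] (Lebesgue measure restricted to [0,1]), and the same holds for the pushforward under the second coordinate projection (x,y) ↦ y. -/
open MeasureTheory Set
open scoped ENNReal

/-- The implicit function `γ_d` defining the bisection expanding cross. -/
noncomputable def bexGamma (d : ℕ) (x y : ℝ) : ℝ :=
  ∑ i ∈ Finset.Icc (1 : ℕ) (2 ^ (d - 1)), ∑ j ∈ Finset.Icc (1 : ℕ) (2 ^ (d - 1)),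
    (|x - (i : ℝ) / 2 ^ (d - 1) + 1 / 2 ^ d| -
        |y - (j : ℝ) / 2 ^ (d - 1) + 1 / 2 ^ d|) *
      (if |x - (i : ℝ) / 2 ^ (d - 1) + 1 / 2 ^ d| ≤ 1 / 2 ^ d then 1 else 0) *
      (if |y - (j : ℝ) / 2 ^ (d - 1) + 1 / 2 ^ d| ≤ 1 / 2 ^ d then 1 else 0)

namespace BexAux

/-- center of the `i`-th dyadic interval -/
noncomputable def cc (d : ℕ) (i : ℕ) : ℝ := (i : ℝ) / 2 ^ (d - 1) - 1 / 2 ^ d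

/-- half-width -/
noncomputable def hh (d : ℕ) : ℝ := 1 / 2 ^ d

lemma hh_pos (d : ℕ) : 0 < hh d := by unfold hh; positivity

lemma two_hh (d : ℕ) (hd : 1 ≤ d) : 2 * hh d = 1 / 2 ^ (d - 1) := by
  unfold hh
  rw [eq_div_iff (by positivity)]
  have : (2:ℝ) * (1 / 2 ^ d) * 2 ^ (d-1) = 2 ^ (d - 1 + 1) / 2 ^ d := by
    rw [pow_succ]; ring
  rw [this, Nat.sub_add_cancel hd, div_self (by positivity)]

lemma cc_sub (d : ℕ) (i i' : ℕ) :
    cc d i' - cc d i = (i' - i : ℝ) / 2 ^ (d - 1) := by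
  unfold cc; ring

noncomputable def Px (d : ℕ) (t : ℝ) : ℝ :=
  ∑ i ∈ Finset.Icc (1 : ℕ) (2 ^ (d - 1)), (if |t - cc d i| ≤ hh d then (1:ℝ) else 0)

noncomputable def Ax (d : ℕ) (t : ℝ) : ℝ :=
  ∑ i ∈ Finset.Icc (1 : ℕ) (2 ^ (d - 1)), |t - cc d i| * (if |t - cc d i| ≤ hh d then (1:ℝ) else 0)

lemma bexGamma_eq (d : ℕ) (x y : ℝ) :
    bexGamma d x y = Ax d x * Px d y - Px d x * Ax d y := by
  unfold bexGamma Ax Px cc hh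
  rw [Finset.sum_mul_sum, Finset.sum_mul_sum, ← Finset.sum_sub_distrib]
  refine Finset.sum_congr rfl fun i _ => ?_
  rw [← Finset.sum_sub_distrib]
  refine Finset.sum_congr rfl fun j _ => ?_
  have h1 : x - (i : ℝ) / 2 ^ (d - 1) + 1 / 2 ^ d = x - ((i : ℝ) / 2 ^ (d - 1) - 1 / 2 ^ d) := by ring
  have h2 : y - (j : ℝ) / 2 ^ (d - 1) + 1 / 2 ^ d = y - ((j : ℝ) / 2 ^ (d - 1) - 1 / 2 ^ d) := by ring
  rw [h1, h2]; ring



lemma cc_add_hh (d : ℕ) (i : ℕ) : cc d i + hh d = (i : ℝ) / 2 ^ (d - 1) := by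
  unfold cc hh; ring

lemma cc_sub_hh (d : ℕ) (hd : 1 ≤ d) (i : ℕ) : cc d i - hh d = ((i : ℝ) - 1) / 2 ^ (d - 1) := by
  have h2 := two_hh d hd
  unfold cc hh at *
  rw [sub_div]
  linarith

/-- Every point of `[0,1]` lies in some dyadic interval. -/
lemma exists_active (d : ℕ) (hd : 1 ≤ d) {t : ℝ} (ht : t ∈ Icc (0:ℝ) 1) :
    ∃ i ∈ Finset.Icc (1 : ℕ) (2 ^ (d - 1)), |t - cc d i| ≤ hh d := by
  set n : ℕ := 2 ^ (d - 1) with hn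
  have hnpos : 0 < n := Nat.pow_pos (by norm_num)
  have hcast : ((n:ℕ):ℝ) = (2:ℝ) ^ (d-1) := by rw [hn]; push_cast; ring
  have hnR : (0:ℝ) < (n:ℝ) := by exact_mod_cast hnpos
  obtain ⟨ht0, ht1⟩ := ht
  set i : ℕ := min n (⌊t * n⌋₊ + 1) with hi
  have hi1 : 1 ≤ i := le_min hnpos (Nat.succ_le_succ (Nat.zero_le _))
  have hin : i ≤ n := min_le_left _ _
  refine ⟨i, Finset.mem_Icc.mpr ⟨hi1, hin⟩, ?_⟩
  have key : ((i:ℝ) - 1) / (2:ℝ)^(d-1) ≤ t ∧ t ≤ (i:ℝ) / (2:ℝ)^(d-1) := by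
    rw [← hcast]
    rcases le_or_gt (⌊t * n⌋₊ + 1) n with h | h
    · have hieq : i = ⌊t * ↑n⌋₊ + 1 := min_eq_right h
      have hfl : (⌊t * (n:ℝ)⌋₊ : ℝ) ≤ t * n := Nat.floor_le (by positivity)
      have hfu : t * (n:ℝ) < ⌊t * (n:ℝ)⌋₊ + 1 := Nat.lt_floor_add_one _
      constructor
      · rw [div_le_iff₀ hnR, hieq]; push_cast; linarith
      · rw [le_div_iff₀ hnR, hieq]; push_cast; linarith
    · have hieq : i = n := min_eq_left (by omega)
      have hfl : (⌊t * (n:ℝ)⌋₊ : ℝ) ≤ t * n := Nat.floor_le (by positivity)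
      have h' : (n:ℝ) ≤ (⌊t * (n:ℝ)⌋₊ : ℝ) + 1 := by exact_mod_cast Nat.le_of_lt_succ (Nat.lt_succ_of_lt h) |>.trans (le_refl _) |>.trans (by omega)
      constructor
      · rw [div_le_iff₀ hnR, hieq]; linarith
      · rw [le_div_iff₀ hnR, hieq]; nlinarith
  rw [abs_le]
  have e1 := cc_sub_hh d hd i
  have e2 := cc_add_hh d i
  constructor
  · linarith [key.1]
  · linarith [key.2]

/-- Two distinct active indices force boundary. -/
lemma active_pair (d : ℕ) (hd : 1 ≤ d) {t : ℝ} {i i' : ℕ}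
    (hi : i ∈ Finset.Icc (1:ℕ) (2 ^ (d-1))) (hi' : i' ∈ Finset.Icc (1:ℕ) (2 ^ (d-1)))
    (h1 : |t - cc d i| ≤ hh d) (h2 : |t - cc d i'| ≤ hh d) (hne : i ≠ i') :
    |t - cc d i| = hh d ∧ |t - cc d i'| = hh d := by
  have hpos := hh_pos d
  have key : ∀ a b : ℕ, a < b → |t - cc d a| ≤ hh d → |t - cc d b| ≤ hh d →
      t - cc d a = hh d ∧ t - cc d b = -(hh d) := by
    intro a b hab ha hb
    have hdiff : cc d b - cc d a = ((b:ℝ) - a) / 2 ^ (d-1) := by unfold cc; ring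
    have hba : (1:ℝ) ≤ (b:ℝ) - a := by
      have : a + 1 ≤ b := hab
      push_cast
      exact_mod_cast by exact_mod_cast (by push_cast; linarith [show ((a:ℝ)+1) ≤ (b:ℝ) from by exact_mod_cast this] : (1:ℝ) ≤ (b:ℝ) - a)
    have h2h := two_hh d hd
    have hpow : (0:ℝ) < 2 ^ (d-1) := by positivity
    have hone : 2 * hh d * 2 ^ (d-1) = 1 := by rw [h2h]; field_simp
    have hsep : 2 * hh d ≤ cc d b - cc d a := by
      rw [hdiff, le_div_iff₀ hpow, hone]; exact hba
    rw [abs_le] at ha hb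
    constructor <;> linarith [ha.1, ha.2, hb.1, hb.2]
  rcases lt_or_gt_of_ne hne with h | h
  · obtain ⟨e1, e2⟩ := key i i' h h1 h2
    rw [e1, e2]; simp [abs_of_pos hpos, abs_neg]
  · obtain ⟨e1, e2⟩ := key i' i h h2 h1
    rw [e2, e1]; simp [abs_of_pos hpos, abs_neg]



lemma Px_eq_card (d : ℕ) (t : ℝ) :
    Px d t = (((Finset.Icc (1:ℕ) (2^(d-1))).filter (fun i => |t - cc d i| ≤ hh d)).card : ℝ) := by
  unfold Px
  rw [Finset.sum_boole]

lemma Px_pos (d : ℕ) {t : ℝ} {i : ℕ} (hi : i ∈ Finset.Icc (1:ℕ) (2^(d-1)))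
    (hti : |t - cc d i| ≤ hh d) : 0 < Px d t := by
  rw [Px_eq_card]
  have : i ∈ (Finset.Icc (1:ℕ) (2^(d-1))).filter (fun i => |t - cc d i| ≤ hh d) :=
    Finset.mem_filter.mpr ⟨hi, hti⟩
  have hc : 0 < ((Finset.Icc (1:ℕ) (2^(d-1))).filter (fun i => |t - cc d i| ≤ hh d)).card :=
    Finset.card_pos.mpr ⟨i, this⟩
  exact_mod_cast hc

lemma Ax_eq (d : ℕ) (hd : 1 ≤ d) {t : ℝ} {i : ℕ} (hi : i ∈ Finset.Icc (1:ℕ) (2^(d-1)))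
    (hti : |t - cc d i| ≤ hh d) : Ax d t = Px d t * |t - cc d i| := by
  classical
  set F := (Finset.Icc (1:ℕ) (2^(d-1))).filter (fun i' => |t - cc d i'| ≤ hh d) with hF
  have hAx : Ax d t = ∑ i' ∈ F, |t - cc d i'| := by
    unfold Ax
    rw [hF, Finset.sum_filter]
    refine Finset.sum_congr rfl fun i' _ => ?_
    split <;> simp
  have hconst : ∀ i' ∈ F, |t - cc d i'| = |t - cc d i| := by
    intro i' hi'
    rw [hF, Finset.mem_filter] at hi'
    rcases eq_or_ne i' i with rfl | hne
    · rfl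
    · obtain ⟨e1, e2⟩ := active_pair d hd hi'.1 hi hi'.2 hti hne
      rw [e1, e2]
  rw [hAx, Finset.sum_congr rfl hconst, Finset.sum_const, Px_eq_card, nsmul_eq_mul]

lemma gamma_zero_iff (d : ℕ) (hd : 1 ≤ d) {x y : ℝ}
    (hx : x ∈ Icc (0:ℝ) 1) (hy : y ∈ Icc (0:ℝ) 1) :
    bexGamma d x y = 0 ↔ ∃ i ∈ Finset.Icc (1:ℕ) (2^(d-1)), ∃ j ∈ Finset.Icc (1:ℕ) (2^(d-1)),
      |x - cc d i| ≤ hh d ∧ |y - cc d j| ≤ hh d ∧ |x - cc d i| = |y - cc d j| := by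
  constructor
  · intro h0
    obtain ⟨i, hi, hxi⟩ := exists_active d hd hx
    obtain ⟨j, hj, hyj⟩ := exists_active d hd hy
    refine ⟨i, hi, j, hj, hxi, hyj, ?_⟩
    rw [bexGamma_eq, Ax_eq d hd hi hxi, Ax_eq d hd hj hyj] at h0
    have h1 : Px d x * Px d y * (|x - cc d i| - |y - cc d j|) = 0 := by linear_combination h0
    rcases mul_eq_zero.mp h1 with h2 | h2
    · have := mul_pos (Px_pos d hi hxi) (Px_pos d hj hyj)
      exact absurd h2 (ne_of_gt this)
    · linarith
  · rintro ⟨i, hi, j, hj, hxi, hyj, heq⟩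
    rw [bexGamma_eq, Ax_eq d hd hi hxi, Ax_eq d hd hj hyj, heq]
    ring




end BexAux

/-- The bisection expanding cross `BEX_d = {(x,y) ∈ [0,1]² : γ_d(x,y) = 0}`. -/
def BEX (d : ℕ) : Set (ℝ × ℝ) :=
  {p | p ∈ Set.Icc (0 : ℝ) 1 ×ˢ Set.Icc (0 : ℝ) 1 ∧ bexGamma d p.1 p.2 = 0}

namespace BexAux

/-- open-segment pieces of the cross, indexed by `(i, j, sign)` -/
def piece (d : ℕ) : ℕ × ℕ × Bool → Set (ℝ × ℝ) := fun k =>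
  if k.1 ∈ Finset.Icc (1:ℕ) (2^(d-1)) ∧ k.2.1 ∈ Finset.Icc (1:ℕ) (2^(d-1)) then
    if k.2.2 then
      {p : ℝ × ℝ | p.1 ∈ Ioo (cc d k.1 - hh d) (cc d k.1 + hh d) ∧
        p.2 = p.1 - cc d k.1 + cc d k.2.1}
    else
      {p : ℝ × ℝ | p.1 ∈ Ioo (cc d k.1 - hh d) (cc d k.1 + hh d) ∧ p.1 ≠ cc d k.1 ∧
        p.2 = cc d k.1 + cc d k.2.1 - p.1}
  else ∅

lemma interval_subset (d : ℕ) (hd : 1 ≤ d) {i : ℕ} (hi : i ∈ Finset.Icc (1:ℕ) (2^(d-1)))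
    {t : ℝ} (ht : |t - cc d i| ≤ hh d) : t ∈ Icc (0:ℝ) 1 := by
  rw [Finset.mem_Icc] at hi
  rw [abs_le] at ht
  have e1 := cc_sub_hh d hd i
  have e2 := cc_add_hh d i
  have hpow : (0:ℝ) < 2 ^ (d-1) := by positivity
  have h1 : (1:ℝ) ≤ (i:ℝ) := by exact_mod_cast hi.1
  have h2 : (i:ℝ) ≤ 2 ^ (d-1) := by exact_mod_cast hi.2
  constructor
  · have : (0:ℝ) ≤ ((i:ℝ) - 1) / 2 ^ (d-1) := div_nonneg (by linarith) (le_of_lt hpow)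
    linarith
  · have : (i:ℝ) / 2 ^ (d-1) ≤ 1 := by rw [div_le_one hpow]; exact h2
    linarith

lemma piece_subset (d : ℕ) (hd : 1 ≤ d) (k : ℕ × ℕ × Bool) : piece d k ⊆ BEX d := by
  obtain ⟨i, j, s⟩ := k
  unfold piece
  split
  case isFalse => simp
  case isTrue hguard =>
    obtain ⟨hi, hj⟩ := hguard
    intro p hp
    have hx : |p.1 - cc d i| ≤ hh d ∧ |p.2 - cc d j| = |p.1 - cc d i| := by
      cases s with
      | true =>
        simp only [Set.mem_setOf_eq, Set.mem_Ioo] at hp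
        obtain ⟨⟨ha, hb⟩, hy⟩ := hp
        refine ⟨le_of_lt (abs_lt.mpr ⟨by linarith, by linarith⟩), ?_⟩
        rw [hy]; congr 1; ring
      | false =>
        simp only [Set.mem_setOf_eq, Set.mem_Ioo] at hp
        obtain ⟨⟨ha, hb⟩, _, hy⟩ := hp
        refine ⟨le_of_lt (abs_lt.mpr ⟨by linarith, by linarith⟩), ?_⟩
        rw [hy]
        have : cc d i + cc d j - p.1 - cc d j = -(p.1 - cc d i) := by ring
        rw [this, abs_neg]
    have hy2 : |p.2 - cc d j| ≤ hh d := hx.2 ▸ hx.1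
    have hx01 : p.1 ∈ Icc (0:ℝ) 1 := interval_subset d hd hi hx.1
    have hy01 : p.2 ∈ Icc (0:ℝ) 1 := interval_subset d hd hj hy2
    refine ⟨⟨hx01, hy01⟩, ?_⟩
    rw [gamma_zero_iff d hd hx01 hy01]
    exact ⟨i, hi, j, hj, hx.1, hy2, hx.2.symm⟩

/-- the countable exceptional set -/
def badSet (d : ℕ) : Set (ℝ × ℝ) :=
  ⋃ (k : ℕ) (m : ℕ), {(((k:ℝ)) / 2 ^ (d-1), ((m:ℝ)) / 2 ^ (d-1))}

lemma badSet_countable (d : ℕ) : (badSet d).Countable :=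
  Set.countable_iUnion fun _ => Set.countable_iUnion fun _ => Set.countable_singleton _

lemma grid_of_abs_eq (d : ℕ) (hd : 1 ≤ d) {t : ℝ} {i : ℕ} (hi : 1 ≤ i)
    (h : |t - cc d i| = hh d) : ∃ k : ℕ, t = (k:ℝ) / 2 ^ (d-1) := by
  rcases abs_eq (le_of_lt (hh_pos d)) |>.mp h with h' | h'
  · exact ⟨i, by have := cc_add_hh d i; linarith⟩
  · refine ⟨i - 1, ?_⟩
    have := cc_sub_hh d hd i
    have hcast : ((i - 1 : ℕ) : ℝ) = (i:ℝ) - 1 := by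
      have : (1:ℕ) ≤ i := hi
      push_cast [this]; ring
    rw [hcast]; linarith

lemma BEX_subset (d : ℕ) (hd : 1 ≤ d) :
    BEX d ⊆ (⋃ k, piece d k) ∪ badSet d := by
  rintro ⟨x, y⟩ ⟨⟨hx01, hy01⟩, hγ⟩
  rw [gamma_zero_iff d hd hx01 hy01] at hγ
  obtain ⟨i, hi, j, hj, hxi, hyj, heq⟩ := hγ
  rcases eq_or_lt_of_le hxi with hb | hlt
  · -- boundary case: grid point
    right
    obtain ⟨k, hk⟩ := grid_of_abs_eq d hd (Finset.mem_Icc.mp hi).1 hb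
    obtain ⟨m, hm⟩ := grid_of_abs_eq d hd (Finset.mem_Icc.mp hj).1 (heq.symm.trans hb)
    exact Set.mem_iUnion.mpr ⟨k, Set.mem_iUnion.mpr ⟨m, by simp only [Set.mem_singleton_iff, Prod.ext_iff]; exact ⟨hk, hm⟩⟩⟩
  · left
    have hxIoo : x ∈ Ioo (cc d i - hh d) (cc d i + hh d) := by
      rw [abs_lt] at hlt
      exact ⟨by linarith [hlt.1], by linarith [hlt.2]⟩
    rcases abs_eq_abs.mp heq.symm with h' | h'
    · refine Set.mem_iUnion.mpr ⟨(i, j, true), ?_⟩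
      simp only [piece, if_pos (And.intro hi hj), if_pos]
      exact ⟨hxIoo, by linarith⟩
    · rcases eq_or_ne x (cc d i) with hxc | hxc
      · refine Set.mem_iUnion.mpr ⟨(i, j, true), ?_⟩
        simp only [piece, if_pos (And.intro hi hj), if_pos]
        refine ⟨hxIoo, ?_⟩
        have : y - cc d j = 0 := by rw [hxc] at h'; linarith
        rw [hxc]; linarith
      · refine Set.mem_iUnion.mpr ⟨(i, j, false), ?_⟩
        simp only [piece, if_pos (And.intro hi hj), Bool.false_eq_true, if_neg, ite_false]
        exact ⟨hxIoo, hxc, by linarith⟩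


lemma mem_piece_elim {d : ℕ} {i j : ℕ} {s : Bool} {p : ℝ × ℝ}
    (hp : p ∈ piece d (i, j, s)) :
    i ∈ Finset.Icc (1:ℕ) (2^(d-1)) ∧ j ∈ Finset.Icc (1:ℕ) (2^(d-1)) ∧
      |p.1 - cc d i| < hh d ∧ |p.2 - cc d j| < hh d ∧
      (if s then p.2 = p.1 - cc d i + cc d j
       else p.1 ≠ cc d i ∧ p.2 = cc d i + cc d j - p.1) := by
  unfold piece at hp
  split at hp
  case isFalse => exact absurd hp (Set.notMem_empty p)
  case isTrue hguard =>
    refine ⟨hguard.1, hguard.2, ?_⟩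
    cases s with
    | true =>
      simp only [if_pos] at hp ⊢
      obtain ⟨⟨ha, hb⟩, hy⟩ := hp
      have h1 : |p.1 - cc d i| < hh d := abs_lt.mpr ⟨by linarith, by linarith⟩
      refine ⟨h1, ?_, hy⟩
      have : p.2 - cc d j = p.1 - cc d i := by rw [hy]; ring
      rw [this]; exact h1
    | false =>
      simp only [Bool.false_eq_true, if_neg, ite_false] at hp ⊢
      obtain ⟨⟨ha, hb⟩, hne, hy⟩ := hp
      have h1 : |p.1 - cc d i| < hh d := abs_lt.mpr ⟨by linarith, by linarith⟩
      refine ⟨h1, ?_, hne, hy⟩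
      have : p.2 - cc d j = -(p.1 - cc d i) := by rw [hy]; ring
      rw [this, abs_neg]; exact h1

lemma piece_pairwise_disjoint (d : ℕ) (hd : 1 ≤ d) :
    Pairwise (Function.onFun Disjoint (piece d)) := by
  rintro ⟨i, j, s⟩ ⟨i', j', s'⟩ hne
  rw [Function.onFun, Set.disjoint_left]
  intro p hp hp'
  obtain ⟨hi, hj, hxi, hyj, hrel⟩ := mem_piece_elim hp
  obtain ⟨hi', hj', hxi', hyj', hrel'⟩ := mem_piece_elim hp'
  have hii : i = i' := by
    by_contra hcon
    exact absurd (active_pair d hd hi hi' (le_of_lt hxi) (le_of_lt hxi') hcon).1 (ne_of_lt hxi)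
  have hjj : j = j' := by
    by_contra hcon
    exact absurd (active_pair d hd hj hj' (le_of_lt hyj) (le_of_lt hyj') hcon).1 (ne_of_lt hyj)
  subst hii; subst hjj
  have hss : s ≠ s' := by
    intro h; exact hne (by rw [h])
  cases s with
  | true =>
    cases s' with
    | true => exact hss rfl
    | false =>
      simp only [if_pos, Bool.false_eq_true, ite_false] at hrel hrel'
      obtain ⟨hne1, hy'⟩ := hrel'
      apply hne1
      have : 2 * p.1 = 2 * cc d i := by rw [hy'] at hrel; linarith
      linarith
  | false =>
    cases s' with
    | false => exact hss rfl
    | true =>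
      simp only [if_pos, Bool.false_eq_true, ite_false] at hrel hrel'
      obtain ⟨hne1, hy⟩ := hrel
      apply hne1
      have : 2 * p.1 = 2 * cc d i := by rw [hy] at hrel'; linarith
      linarith

lemma piece_measurable (d : ℕ) (k : ℕ × ℕ × Bool) : MeasurableSet (piece d k) := by
  obtain ⟨i, j, s⟩ := k
  unfold piece
  split
  case isFalse => exact MeasurableSet.empty
  case isTrue =>
    cases s with
    | true =>
      simp only [if_pos]
      have : {p : ℝ × ℝ | p.1 ∈ Ioo (cc d i - hh d) (cc d i + hh d) ∧
          p.2 = p.1 - cc d i + cc d j} =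
          (Prod.fst ⁻¹' Ioo (cc d i - hh d) (cc d i + hh d)) ∩
          ((fun p : ℝ × ℝ => p.2 - p.1) ⁻¹' {cc d j - cc d i}) := by
        ext p
        simp only [Set.mem_setOf_eq, Set.mem_inter_iff, Set.mem_preimage,
          Set.mem_singleton_iff]
        constructor
        · rintro ⟨h1, h2⟩; exact ⟨h1, by rw [h2]; ring⟩
        · rintro ⟨h1, h2⟩; exact ⟨h1, by linarith⟩
      rw [this]
      exact (measurable_fst measurableSet_Ioo).inter
        ((measurable_snd.sub measurable_fst) (measurableSet_singleton _))
    | false =>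
      simp only [Bool.false_eq_true, ite_false]
      have : {p : ℝ × ℝ | p.1 ∈ Ioo (cc d i - hh d) (cc d i + hh d) ∧ p.1 ≠ cc d i ∧
          p.2 = cc d i + cc d j - p.1} =
          (Prod.fst ⁻¹' Ioo (cc d i - hh d) (cc d i + hh d)) ∩
          ((Prod.fst ⁻¹' {cc d i})ᶜ ∩
            ((fun p : ℝ × ℝ => p.2 + p.1) ⁻¹' {cc d i + cc d j})) := by
        ext p
        simp only [Set.mem_setOf_eq, Set.mem_inter_iff, Set.mem_preimage,
          Set.mem_singleton_iff, Set.mem_compl_iff]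
        constructor
        · rintro ⟨h1, h2, h3⟩; exact ⟨h1, h2, by rw [h3]; ring⟩
        · rintro ⟨h1, h2, h3⟩; exact ⟨h1, h2, by linarith⟩
      rw [this]
      exact (measurable_fst measurableSet_Ioo).inter
        (((measurable_fst (measurableSet_singleton _)).compl).inter
          ((measurable_snd.add measurable_fst) (measurableSet_singleton _)))


section Isometries

lemma iso_fst_pos (a : ℝ) : Isometry (fun t : ℝ => (t, t + a)) :=
  Isometry.of_dist_eq fun t u => by
    simp only [Prod.dist_eq, Real.dist_eq]
    rw [show t + a - (u + a) = t - u by ring, max_self]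

lemma iso_fst_neg (b : ℝ) : Isometry (fun t : ℝ => (t, b - t)) :=
  Isometry.of_dist_eq fun t u => by
    simp only [Prod.dist_eq, Real.dist_eq]
    rw [show b - t - (b - u) = -(t - u) by ring, abs_neg, max_self]

lemma iso_snd_pos (a : ℝ) : Isometry (fun t : ℝ => (t + a, t)) :=
  Isometry.of_dist_eq fun t u => by
    simp only [Prod.dist_eq, Real.dist_eq]
    rw [show t + a - (u + a) = t - u by ring, max_self]

lemma iso_snd_neg (b : ℝ) : Isometry (fun t : ℝ => (b - t, t)) :=
  Isometry.of_dist_eq fun t u => by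
    simp only [Prod.dist_eq, Real.dist_eq]
    rw [show b - t - (b - u) = -(t - u) by ring, abs_neg, max_self]

end Isometries

/-- Projection of 1-dimensional Hausdorff measure on an isometrically parametrized
curve whose parameter is recovered by `π`. -/
lemma seg_measure {g : ℝ → ℝ × ℝ} {π : ℝ × ℝ → ℝ} (hg : Isometry g)
    (hgπ : ∀ t, π (g t) = t) (s A : Set ℝ) :
    μH[1] (π ⁻¹' A ∩ g '' s) = volume (s ∩ A) := by
  have himg : π ⁻¹' A ∩ g '' s = g '' (s ∩ A) := by
    ext p
    constructor
    · rintro ⟨hA, t, ht, rfl⟩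
      refine ⟨t, ⟨ht, ?_⟩, rfl⟩
      have : π (g t) ∈ A := hA
      rwa [hgπ t] at this
    · rintro ⟨t, ⟨ht, htA⟩, rfl⟩
      exact ⟨show π (g t) ∈ A by rwa [hgπ t], t, ht, rfl⟩
  rw [himg, hg.hausdorffMeasure_image (Or.inl zero_le_one), hausdorffMeasure_real]

lemma piece_fst_measure (d : ℕ) {i j : ℕ} (s : Bool)
    (hi : i ∈ Finset.Icc (1:ℕ) (2^(d-1))) (hj : j ∈ Finset.Icc (1:ℕ) (2^(d-1)))
    (A : Set ℝ) :
    μH[1] (Prod.fst ⁻¹' A ∩ piece d (i, j, s)) =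
      volume (Ioo (cc d i - hh d) (cc d i + hh d) ∩ A) := by
  cases s with
  | true =>
    have himg : piece d (i, j, true) =
        (fun t : ℝ => (t, t + (cc d j - cc d i))) '' Ioo (cc d i - hh d) (cc d i + hh d) := by
      unfold piece
      rw [if_pos ⟨hi, hj⟩, if_pos rfl]
      ext p
      simp only [Set.mem_setOf_eq, Set.mem_image]
      constructor
      · rintro ⟨h1, h2⟩; exact ⟨p.1, h1, by rw [Prod.ext_iff]; exact ⟨rfl, by simp; linarith⟩⟩
      · rintro ⟨t, ht, rfl⟩; exact ⟨ht, by ring⟩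
    rw [himg, seg_measure (iso_fst_pos _) (fun t => rfl)]
  | false =>
    have himg : piece d (i, j, false) =
        (fun t : ℝ => (t, (cc d i + cc d j) - t)) ''
          (Ioo (cc d i - hh d) (cc d i + hh d) \ {cc d i}) := by
      unfold piece
      rw [if_pos ⟨hi, hj⟩]
      simp only [Bool.false_eq_true, ite_false]
      ext p
      simp only [Set.mem_setOf_eq, Set.mem_image, Set.mem_diff, Set.mem_singleton_iff]
      constructor
      · rintro ⟨h1, h2, h3⟩
        exact ⟨p.1, ⟨h1, h2⟩, by rw [Prod.ext_iff]; exact ⟨rfl, by simp; linarith⟩⟩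
      · rintro ⟨t, ⟨ht, htne⟩, rfl⟩; exact ⟨ht, htne, by ring⟩
    rw [himg, seg_measure (iso_fst_neg _) (fun t => rfl)]
    have : (Ioo (cc d i - hh d) (cc d i + hh d) \ {cc d i}) ∩ A =
        (Ioo (cc d i - hh d) (cc d i + hh d) ∩ A) \ {cc d i} := by
      ext t; simp only [Set.mem_inter_iff, Set.mem_diff, Set.mem_singleton_iff]; tauto
    rw [this, measure_diff_null (Real.volume_singleton)]

lemma piece_snd_measure (d : ℕ) {i j : ℕ} (s : Bool)
    (hi : i ∈ Finset.Icc (1:ℕ) (2^(d-1))) (hj : j ∈ Finset.Icc (1:ℕ) (2^(d-1)))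
    (A : Set ℝ) :
    μH[1] (Prod.snd ⁻¹' A ∩ piece d (i, j, s)) =
      volume (Ioo (cc d j - hh d) (cc d j + hh d) ∩ A) := by
  cases s with
  | true =>
    have himg : piece d (i, j, true) =
        (fun t : ℝ => (t + (cc d i - cc d j), t)) '' Ioo (cc d j - hh d) (cc d j + hh d) := by
      unfold piece
      rw [if_pos ⟨hi, hj⟩, if_pos rfl]
      ext p
      simp only [Set.mem_setOf_eq, Set.mem_image, Set.mem_Ioo]
      constructor
      · rintro ⟨⟨h1, h2⟩, h3⟩
        exact ⟨p.2, ⟨by linarith, by linarith⟩,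
          by rw [Prod.ext_iff]; exact ⟨by simp; linarith, rfl⟩⟩
      · rintro ⟨t, ⟨h1, h2⟩, rfl⟩
        exact ⟨⟨by simp; linarith, by simp; linarith⟩, by simp; ring⟩
    rw [himg, seg_measure (iso_snd_pos _) (fun t => rfl)]
  | false =>
    have himg : piece d (i, j, false) =
        (fun t : ℝ => (cc d i + cc d j - t, t)) ''
          (Ioo (cc d j - hh d) (cc d j + hh d) \ {cc d j}) := by
      unfold piece
      rw [if_pos ⟨hi, hj⟩]
      simp only [Bool.false_eq_true, ite_false]
      ext p
      simp only [Set.mem_setOf_eq, Set.mem_image, Set.mem_diff, Set.mem_singleton_iff,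
        Set.mem_Ioo]
      constructor
      · rintro ⟨⟨h1, h2⟩, hne, h3⟩
        refine ⟨p.2, ⟨⟨by linarith, by linarith⟩, ?_⟩,
          by rw [Prod.ext_iff]; exact ⟨by simp; linarith, rfl⟩⟩
        intro hcon
        exact hne (by linarith)
      · rintro ⟨t, ⟨⟨h1, h2⟩, htne⟩, rfl⟩
        refine ⟨⟨by simp; linarith, by simp; linarith⟩, ?_, by simp⟩
        simp only [ne_eq]
        intro hcon
        apply htne
        linarith
    rw [himg, seg_measure (iso_snd_neg _) (fun t => rfl)]
    have : (Ioo (cc d j - hh d) (cc d j + hh d) \ {cc d j}) ∩ A =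
        (Ioo (cc d j - hh d) (cc d j + hh d) ∩ A) \ {cc d j} := by
      ext t; simp only [Set.mem_inter_iff, Set.mem_diff, Set.mem_singleton_iff]; tauto
    rw [this, measure_diff_null (Real.volume_singleton)]


lemma Ioo_disjoint (d : ℕ) (hd : 1 ≤ d) {i i' : ℕ}
    (hi : i ∈ Finset.Icc (1:ℕ) (2^(d-1))) (hi' : i' ∈ Finset.Icc (1:ℕ) (2^(d-1)))
    (hne : i ≠ i') :
    Disjoint (Ioo (cc d i - hh d) (cc d i + hh d)) (Ioo (cc d i' - hh d) (cc d i' + hh d)) := by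
  rw [Set.disjoint_left]
  rintro t ⟨h1, h2⟩ ⟨h3, h4⟩
  have e1 : |t - cc d i| < hh d := abs_lt.mpr ⟨by linarith, by linarith⟩
  have e2 : |t - cc d i'| < hh d := abs_lt.mpr ⟨by linarith, by linarith⟩
  exact absurd (active_pair d hd hi hi' (le_of_lt e1) (le_of_lt e2) hne).1 (ne_of_lt e1)

lemma Ioo_subset_Icc01 (d : ℕ) (hd : 1 ≤ d) {i : ℕ} (hi : i ∈ Finset.Icc (1:ℕ) (2^(d-1))) :
    Ioo (cc d i - hh d) (cc d i + hh d) ⊆ Icc (0:ℝ) 1 := by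
  rintro t ⟨h1, h2⟩
  exact interval_subset d hd hi (le_of_lt (abs_lt.mpr ⟨by linarith, by linarith⟩))

lemma sum_interval (d : ℕ) (hd : 1 ≤ d) (A : Set ℝ) (hA : MeasurableSet A) :
    ∑ i ∈ Finset.Icc (1:ℕ) (2^(d-1)),
      volume (Ioo (cc d i - hh d) (cc d i + hh d) ∩ A) = volume (Icc (0:ℝ) 1 ∩ A) := by
  rw [← measure_biUnion_finset ?hd ?hm]
  case hd =>
    intro i hi i' hi' hne
    exact Disjoint.mono Set.inter_subset_left Set.inter_subset_left
      (Ioo_disjoint d hd (by simpa using hi) (by simpa using hi') hne)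
  case hm => exact fun i _ => measurableSet_Ioo.inter hA
  apply measure_congr
  rw [ae_eq_set]
  constructor
  · have : (⋃ i ∈ Finset.Icc (1:ℕ) (2^(d-1)),
        Ioo (cc d i - hh d) (cc d i + hh d) ∩ A) \ (Icc (0:ℝ) 1 ∩ A) = ∅ := by
      rw [Set.diff_eq_empty]
      refine Set.iUnion₂_subset fun i hi => ?_
      exact Set.inter_subset_inter_left A (Ioo_subset_Icc01 d hd hi)
    rw [this]; exact measure_empty
  · refine measure_mono_null ?_ ((Set.countable_iUnion
      (fun k : ℕ => Set.countable_singleton ((k:ℝ) / 2 ^ (d-1)))).measure_zero volume)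
    rintro t ⟨⟨ht01, htA⟩, hnot⟩
    simp only [Set.mem_iUnion, Set.mem_singleton_iff]
    obtain ⟨i, hi, hti⟩ := exists_active d hd ht01
    have : t ∉ Ioo (cc d i - hh d) (cc d i + hh d) := by
      intro hcon
      exact hnot (Set.mem_biUnion hi ⟨hcon, htA⟩)
    have habs : |t - cc d i| = hh d := by
      rcases eq_or_lt_of_le hti with h | h
      · exact h
      · exact absurd (abs_lt.mp h) (fun ⟨a, b⟩ => this ⟨by linarith, by linarith⟩)
    exact grid_of_abs_eq d hd (Finset.mem_Icc.mp hi).1 habs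

lemma bex_ae_eq (d : ℕ) (hd : 1 ≤ d) :
    BEX d =ᵐ[(μH[1] : Measure (ℝ × ℝ))] ⋃ k, piece d k := by
  haveI : NullSingletonClass (μH[1] : Measure (ℝ × ℝ)) := Measure.noAtoms_hausdorff _ one_pos
  have hbad : μH[1] (badSet d) = 0 := (badSet_countable d).measure_zero _
  rw [ae_eq_set]
  constructor
  · refine measure_mono_null ?_ hbad
    rintro p ⟨hp, hnot⟩
    rcases BEX_subset d hd hp with h | h
    · exact absurd h hnot
    · exact h
  · have : (⋃ k, piece d k) \ BEX d = ∅ :=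
      Set.diff_eq_empty.mpr (Set.iUnion_subset (piece_subset d hd))
    rw [this]; exact measure_empty

lemma nat_pow_aux (d : ℕ) (hd : 1 ≤ d) : 2 ^ (d-1) * 2 = 2 ^ d := by
  rw [← pow_succ, Nat.sub_add_cancel hd]

lemma map_restrict_fst (d : ℕ) (hd : 1 ≤ d) :
    ((μH[1] : Measure (ℝ × ℝ)).restrict (BEX d)).map Prod.fst
      = ((2:ℝ≥0∞) ^ d) • volume.restrict (Icc (0:ℝ) 1) := by
  ext A hA
  rw [Measure.map_apply measurable_fst hA, Measure.restrict_apply (measurable_fst hA),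
    Measure.smul_apply, Measure.restrict_apply hA, smul_eq_mul]
  have h1 : μH[1] (Prod.fst ⁻¹' A ∩ BEX d) = μH[1] (Prod.fst ⁻¹' A ∩ ⋃ k, piece d k) :=
    measure_congr (ae_eq_set_inter (Filter.EventuallyEq.refl _ _) (bex_ae_eq d hd))
  rw [h1, Set.inter_iUnion, measure_iUnion ?hdisj ?hmeas]
  case hdisj =>
    exact (piece_pairwise_disjoint d hd).mono fun k k' h =>
      h.mono Set.inter_subset_right Set.inter_subset_right
  case hmeas => exact fun k => (measurable_fst hA).inter (piece_measurable d k)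
  have hterm : ∀ k : ℕ × ℕ × Bool, μH[1] (Prod.fst ⁻¹' A ∩ piece d k)
      = if k.1 ∈ Finset.Icc (1:ℕ) (2^(d-1)) ∧ k.2.1 ∈ Finset.Icc (1:ℕ) (2^(d-1))
        then volume (Ioo (cc d k.1 - hh d) (cc d k.1 + hh d) ∩ A) else 0 := by
    rintro ⟨i, j, s⟩
    split
    case isTrue h => exact piece_fst_measure d s h.1 h.2 A
    case isFalse h =>
      have : piece d (i, j, s) = ∅ := by unfold piece; rw [if_neg h]
      rw [this]; simp
  rw [tsum_congr hterm]
  rw [tsum_eq_sum (s := (Finset.Icc (1:ℕ) (2^(d-1))) ×ˢ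
      ((Finset.Icc (1:ℕ) (2^(d-1))) ×ˢ (Finset.univ : Finset Bool)))
    (by
      rintro ⟨i, j, s⟩ hk
      rw [if_neg]
      intro ⟨h1, h2⟩
      exact hk (Finset.mem_product.mpr ⟨h1, Finset.mem_product.mpr ⟨h2, Finset.mem_univ s⟩⟩))]
  rw [Finset.sum_product]
  have hinner : ∀ i ∈ Finset.Icc (1:ℕ) (2^(d-1)),
      (∑ y ∈ (Finset.Icc (1:ℕ) (2^(d-1))) ×ˢ (Finset.univ : Finset Bool),
        (if (i, y).1 ∈ Finset.Icc (1:ℕ) (2^(d-1)) ∧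
            (i, y).2.1 ∈ Finset.Icc (1:ℕ) (2^(d-1))
          then volume (Ioo (cc d (i, y).1 - hh d) (cc d (i, y).1 + hh d) ∩ A) else 0))
      = (2^(d-1) * 2 : ℕ) • volume (Ioo (cc d i - hh d) (cc d i + hh d) ∩ A) := by
    intro i hi
    have hconst : ∀ y ∈ (Finset.Icc (1:ℕ) (2^(d-1))) ×ˢ (Finset.univ : Finset Bool),
        (if (i, y).1 ∈ Finset.Icc (1:ℕ) (2^(d-1)) ∧
            (i, y).2.1 ∈ Finset.Icc (1:ℕ) (2^(d-1))
          then volume (Ioo (cc d (i, y).1 - hh d) (cc d (i, y).1 + hh d) ∩ A) else 0)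
        = volume (Ioo (cc d i - hh d) (cc d i + hh d) ∩ A) := by
      intro y hy
      rw [if_pos ⟨hi, (Finset.mem_product.mp hy).1⟩]
    rw [Finset.sum_congr rfl hconst, Finset.sum_const]
    congr 1
    rw [Finset.card_product, Nat.card_Icc]
    simp
  rw [Finset.sum_congr rfl hinner, ← Finset.smul_sum, sum_interval d hd A hA,
    nat_pow_aux d hd, nsmul_eq_mul, Set.inter_comm]
  norm_num


lemma map_restrict_snd (d : ℕ) (hd : 1 ≤ d) :
    ((μH[1] : Measure (ℝ × ℝ)).restrict (BEX d)).map Prod.snd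
      = ((2:ℝ≥0∞) ^ d) • volume.restrict (Icc (0:ℝ) 1) := by
  ext A hA
  rw [Measure.map_apply measurable_snd hA, Measure.restrict_apply (measurable_snd hA),
    Measure.smul_apply, Measure.restrict_apply hA, smul_eq_mul]
  have h1 : μH[1] (Prod.snd ⁻¹' A ∩ BEX d) = μH[1] (Prod.snd ⁻¹' A ∩ ⋃ k, piece d k) :=
    measure_congr (ae_eq_set_inter (Filter.EventuallyEq.refl _ _) (bex_ae_eq d hd))
  rw [h1, Set.inter_iUnion, measure_iUnion ?hdisj ?hmeas]
  case hdisj =>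
    exact (piece_pairwise_disjoint d hd).mono fun k k' h =>
      h.mono Set.inter_subset_right Set.inter_subset_right
  case hmeas => exact fun k => (measurable_snd hA).inter (piece_measurable d k)
  have hterm : ∀ k : ℕ × ℕ × Bool, μH[1] (Prod.snd ⁻¹' A ∩ piece d k)
      = if k.1 ∈ Finset.Icc (1:ℕ) (2^(d-1)) ∧ k.2.1 ∈ Finset.Icc (1:ℕ) (2^(d-1))
        then volume (Ioo (cc d k.2.1 - hh d) (cc d k.2.1 + hh d) ∩ A) else 0 := by
    rintro ⟨i, j, s⟩
    split
    case isTrue h => exact piece_snd_measure d s h.1 h.2 A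
    case isFalse h =>
      have : piece d (i, j, s) = ∅ := by unfold piece; rw [if_neg h]
      rw [this]; simp
  rw [tsum_congr hterm]
  rw [tsum_eq_sum (s := (Finset.Icc (1:ℕ) (2^(d-1))) ×ˢ
      ((Finset.Icc (1:ℕ) (2^(d-1))) ×ˢ (Finset.univ : Finset Bool)))
    (by
      rintro ⟨i, j, s⟩ hk
      rw [if_neg]
      intro ⟨h1, h2⟩
      exact hk (Finset.mem_product.mpr ⟨h1, Finset.mem_product.mpr ⟨h2, Finset.mem_univ s⟩⟩))]
  rw [Finset.sum_product]
  have hinner : ∀ i ∈ Finset.Icc (1:ℕ) (2^(d-1)),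
      (∑ y ∈ (Finset.Icc (1:ℕ) (2^(d-1))) ×ˢ (Finset.univ : Finset Bool),
        (if (i, y).1 ∈ Finset.Icc (1:ℕ) (2^(d-1)) ∧
            (i, y).2.1 ∈ Finset.Icc (1:ℕ) (2^(d-1))
          then volume (Ioo (cc d (i, y).2.1 - hh d) (cc d (i, y).2.1 + hh d) ∩ A) else 0))
      = (2:ℕ) • volume (Icc (0:ℝ) 1 ∩ A) := by
    intro i hi
    rw [Finset.sum_product]
    have hj : ∀ j ∈ Finset.Icc (1:ℕ) (2^(d-1)),
        (∑ s ∈ (Finset.univ : Finset Bool),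
          (if (i, j, s).1 ∈ Finset.Icc (1:ℕ) (2^(d-1)) ∧
              (i, j, s).2.1 ∈ Finset.Icc (1:ℕ) (2^(d-1))
            then volume (Ioo (cc d (i, j, s).2.1 - hh d) (cc d (i, j, s).2.1 + hh d) ∩ A)
            else 0))
        = (2:ℕ) • volume (Ioo (cc d j - hh d) (cc d j + hh d) ∩ A) := by
      intro j hj
      have : ∀ s ∈ (Finset.univ : Finset Bool),
          (if (i, j, s).1 ∈ Finset.Icc (1:ℕ) (2^(d-1)) ∧
              (i, j, s).2.1 ∈ Finset.Icc (1:ℕ) (2^(d-1))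
            then volume (Ioo (cc d (i, j, s).2.1 - hh d) (cc d (i, j, s).2.1 + hh d) ∩ A)
            else 0)
          = volume (Ioo (cc d j - hh d) (cc d j + hh d) ∩ A) := by
        intro s _
        rw [if_pos ⟨hi, hj⟩]
      rw [Finset.sum_congr rfl this, Finset.sum_const, Finset.card_univ, Fintype.card_bool]
    rw [Finset.sum_congr rfl hj, ← Finset.smul_sum, sum_interval d hd A hA]
  rw [Finset.sum_congr rfl hinner, Finset.sum_const, Nat.card_Icc, smul_smul]
  have hcard : (2 ^ (d-1) + 1 - 1) * 2 = 2 ^ d := by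
    simpa using nat_pow_aux d hd
  rw [hcard, nsmul_eq_mul, Set.inter_comm A]
  norm_num

lemma BEX_total (d : ℕ) (hd : 1 ≤ d) :
    (μH[1] : Measure (ℝ × ℝ)) (BEX d) = (2:ℝ≥0∞) ^ d := by
  have h := congrArg (fun μ : Measure ℝ => μ Set.univ) (map_restrict_fst d hd)
  rw [Measure.map_apply measurable_fst MeasurableSet.univ, Set.preimage_univ,
    Measure.restrict_apply_univ, Measure.smul_apply, Measure.restrict_apply_univ,
    Real.volume_Icc] at h
  rw [h]
  norm_num

end BexAux


/-- `μ_d`: the uniform probability distribution on `BEX_d`, i.e. one-dimensional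
Hausdorff measure restricted to `BEX_d` and normalized to total mass one. -/
noncomputable def bexMeasure (d : ℕ) : Measure (ℝ × ℝ) :=
  ((μH[1] : Measure (ℝ × ℝ)) (BEX d))⁻¹ • (μH[1] : Measure (ℝ × ℝ)).restrict (BEX d)

/-- Uniform marginals of the uniform distribution on the bisection expanding cross:
for every `d ≥ 1`, both coordinate projections push `μ_d` forward to the uniform
distribution on `[0,1]` (Lebesgue measure restricted to `[0,1]`). -/
theorem bexMeasure_uniform_marginals (d : ℕ) (hd : 1 ≤ d) :
    (bexMeasure d).map Prod.fst = volume.restrict (Set.Icc (0 : ℝ) 1) ∧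
    (bexMeasure d).map Prod.snd = volume.restrict (Set.Icc (0 : ℝ) 1) := by
  have h2 : ((2:ℝ≥0∞) ^ d)⁻¹ * (2:ℝ≥0∞) ^ d = 1 :=
    ENNReal.inv_mul_cancel (pow_ne_zero d (by norm_num)) (ENNReal.pow_ne_top (by norm_num))
  constructor
  · rw [bexMeasure, BexAux.BEX_total d hd, Measure.map_smul,
      BexAux.map_restrict_fst d hd, smul_smul, h2, one_smul]
  · rw [bexMeasure, BexAux.BEX_total d hd, Measure.map_smul,
      BexAux.map_restrict_snd d hd, smul_smul, h2, one_smul]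
end

section
/- For all x, y ∈ [0,1], the joint distribution functions of the uniform distributions on the bisection expanding crosses converge to the product of the marginals: μ_d([0,x] × [0,y]) → x·y as d → ∞. -/
open MeasureTheory
open scoped ENNReal

namespace BexProof

/-- center of the i-th dyadic interval -/
noncomputable def cc (n i : ℕ) : ℝ := (2 * (i : ℝ) - 1) / (2 * n)

/-- half-width -/
noncomputable def hh (n : ℕ) : ℝ := 1 / (2 * (n : ℝ))

/-- one diagonal of a small square, slope `e = ±1` -/
noncomputable def dg (n i j : ℕ) (e : ℝ) : Set (ℝ × ℝ) :=
  (fun t : ℝ => (t, e * (t - cc n i) + cc n j)) '' Set.Icc (cc n i - hh n) (cc n i + hh n)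

/-- the cross: both diagonals -/
noncomputable def cross (n i j : ℕ) : Set (ℝ × ℝ) := dg n i j 1 ∪ dg n i j (-1)

lemma isometry_line (a b e : ℝ) (he : |e| = 1) :
    Isometry (fun t : ℝ => ((t, e * (t - a) + b) : ℝ × ℝ)) := by
  apply Isometry.of_dist_eq
  intro s t
  rw [Prod.dist_eq]
  simp only [Real.dist_eq]
  have : e * (s - a) + b - (e * (t - a) + b) = e * (s - t) := by ring
  rw [this, abs_mul, he, one_mul, max_self]

lemma hmeas_dg (n i j : ℕ) (e : ℝ) (he : |e| = 1) (hn : 1 ≤ n) :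
    μH[1] (dg n i j e) = ENNReal.ofReal (2 * hh n) := by
  rw [dg, (isometry_line (cc n i) (cc n j) e he).hausdorffMeasure_image (Or.inl zero_le_one),
    MeasureTheory.hausdorffMeasure_real, Real.volume_Icc]
  congr 1
  ring

lemma hmeas_singleton (p : ℝ × ℝ) : μH[1] ({p} : Set (ℝ × ℝ)) = 0 := by
  have h : ({p} : Set (ℝ × ℝ)) =
      (fun t : ℝ => ((t, 1 * (t - p.1) + p.2) : ℝ × ℝ)) '' {p.1} := by
    simp
  rw [h, (isometry_line p.1 p.2 1 (by norm_num)).hausdorffMeasure_image (Or.inl zero_le_one),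
    MeasureTheory.hausdorffMeasure_real]
  exact measure_singleton _

lemma measurable_dg (n i j : ℕ) (e : ℝ) (he : |e| = 1) : MeasurableSet (dg n i j e) :=
  ((isCompact_Icc.image (isometry_line (cc n i) (cc n j) e he).continuous).isClosed).measurableSet

lemma mem_dg {n i j : ℕ} {e : ℝ} {p : ℝ × ℝ} :
    p ∈ dg n i j e ↔ |p.1 - cc n i| ≤ hh n ∧ p.2 = e * (p.1 - cc n i) + cc n j := by
  constructor
  · rintro ⟨t, ht, rfl⟩
    refine ⟨?_, rfl⟩
    rw [abs_le]
    constructor <;> simp at ht ⊢ <;> linarith [ht.1, ht.2]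
  · rintro ⟨h1, h2⟩
    refine ⟨p.1, ?_, ?_⟩
    · rw [Set.mem_Icc]; rw [abs_le] at h1; constructor <;> linarith [h1.1, h1.2]
    · show (p.1, e * (p.1 - cc n i) + cc n j) = p
      rw [← h2]

lemma mem_cross {n i j : ℕ} {p : ℝ × ℝ} :
    p ∈ cross n i j ↔ |p.1 - cc n i| ≤ hh n ∧ |p.2 - cc n j| = |p.1 - cc n i| := by
  rw [cross, Set.mem_union, mem_dg, mem_dg]
  constructor
  · rintro (⟨h1, h2⟩ | ⟨h1, h2⟩) <;> refine ⟨h1, ?_⟩ <;> rw [h2]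
    · ring_nf
    · rw [show -1 * (p.1 - cc n i) + cc n j - cc n j = -(p.1 - cc n i) by ring, abs_neg]
  · rintro ⟨h1, h2⟩
    rcases abs_eq_abs.mp h2 with h | h
    · left; exact ⟨h1, by linarith⟩
    · right; exact ⟨h1, by linarith⟩

lemma hmeas_cross (n i j : ℕ) (hn : 1 ≤ n) :
    μH[1] (cross n i j) = ENNReal.ofReal (4 * hh n) := by
  have hpos : 0 ≤ hh n := by
    have : (0:ℝ) < n := by exact_mod_cast hn
    rw [hh]; positivity
  have key := measure_union_add_inter (μ := (μH[1] : Measure (ℝ × ℝ)))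
    (dg n i j 1) (measurable_dg n i j (-1) (by norm_num))
  have hint : μH[1] (dg n i j 1 ∩ dg n i j (-1)) = 0 := by
    have hsub : dg n i j 1 ∩ dg n i j (-1) ⊆ {((cc n i, cc n j) : ℝ × ℝ)} := by
      rintro p ⟨h1, h2⟩
      rw [mem_dg] at h1 h2
      have e1 := h1.2; have e2 := h2.2
      have : p.1 = cc n i := by nlinarith [e1, e2]
      have : p = (cc n i, cc n j) := by
        ext
        · exact this
        · rw [e1, this]; ring
      simp [this]
    exact measure_mono_null hsub (hmeas_singleton _)
  rw [hint, add_zero, hmeas_dg n i j 1 (by norm_num) hn,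
    hmeas_dg n i j (-1) (by norm_num) hn, ← ENNReal.ofReal_add (by linarith) (by linarith)] at key
  rw [cross, key]
  congr 1
  ring


lemma corners_null (n i j : ℕ) :
    μH[1] ({cc n i - hh n, cc n i + hh n} ×ˢ ({cc n j - hh n, cc n j + hh n} : Set ℝ)) = 0 := by
  have : ({cc n i - hh n, cc n i + hh n} ×ˢ ({cc n j - hh n, cc n j + hh n} : Set ℝ)) ⊆
      {((cc n i - hh n, cc n j - hh n) : ℝ × ℝ)} ∪ {(cc n i - hh n, cc n j + hh n)} ∪
        {(cc n i + hh n, cc n j - hh n)} ∪ {(cc n i + hh n, cc n j + hh n)} := by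
    rintro ⟨a, b⟩ ⟨ha, hb⟩
    simp only [Set.mem_insert_iff, Set.mem_singleton_iff] at ha hb
    simp only [Set.mem_union, Set.mem_singleton_iff, Prod.mk.injEq]
    rcases ha with rfl | rfl <;> rcases hb with rfl | rfl <;> tauto
  refine measure_mono_null this ?_
  refine measure_union_null (measure_union_null (measure_union_null ?_ ?_) ?_) ?_ <;>
    exact hmeas_singleton _

lemma cc_dist (n : ℕ) (hn : 1 ≤ n) {i i' : ℕ} (h : i ≠ i') :
    2 * hh n ≤ |cc n i - cc n i'| := by
  have hn0 : (0:ℝ) < n := by exact_mod_cast hn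
  have : cc n i - cc n i' = ((i:ℝ) - i') / n := by
    rw [cc, cc]; field_simp; ring
  rw [this, hh, abs_div, abs_of_pos hn0]
  rw [show 2 * (1 / (2 * (n:ℝ))) = 1 / n by field_simp, div_le_div_iff₀ (by positivity) hn0]
  have : (1:ℝ) ≤ |(i:ℝ) - i'| := by
    have hz : ((i:ℤ) - (i':ℤ)) ≠ 0 := by
      intro hc
      have : (i:ℤ) = i' := sub_eq_zero.mp hc
      exact h (by exact_mod_cast this)
    have h1 : (((i:ℤ) - (i':ℤ) : ℤ) : ℝ) = (i:ℝ) - i' := by push_cast; ring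
    rw [← h1, ← Int.cast_abs]
    exact_mod_cast Int.one_le_abs hz
  nlinarith

lemma cross_inter_null (n : ℕ) (hn : 1 ≤ n) {i j i' j' : ℕ}
    (h : (i, j) ≠ (i', j')) :
    μH[1] (cross n i j ∩ cross n i' j') = 0 := by
  have hn0 : (0:ℝ) < n := by exact_mod_cast hn
  have hpos : 0 < hh n := by rw [hh]; positivity
  -- the intersection is contained in the 4 corners of the (i,j) square
  have hsub : cross n i j ∩ cross n i' j' ⊆
      ({cc n i - hh n, cc n i + hh n} ×ˢ ({cc n j - hh n, cc n j + hh n} : Set ℝ)) := by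
    rintro p ⟨h1, h2⟩
    rw [mem_cross] at h1 h2
    have habs : |p.1 - cc n i| = hh n := by
      by_cases hii : i = i'
      · -- then j ≠ j', use y coordinates
        subst hii
        have hjj : j ≠ j' := fun hc => h (by rw [hc])
        have := cc_dist n hn hjj
        have t1 : |cc n j - cc n j'| ≤ |p.2 - cc n j| + |p.2 - cc n j'| := by
          have := abs_sub_le (cc n j) p.2 (cc n j')
          calc |cc n j - cc n j'| ≤ |cc n j - p.2| + |p.2 - cc n j'| := abs_sub_le _ _ _
            _ = |p.2 - cc n j| + |p.2 - cc n j'| := by rw [abs_sub_comm]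
        rw [h1.2, h2.2] at t1
        have := h1.1; have := h2.1
        linarith [h1.2 ▸ h1.1]
      · have := cc_dist n hn hii
        have t1 : |cc n i - cc n i'| ≤ |p.1 - cc n i| + |p.1 - cc n i'| := by
          calc |cc n i - cc n i'| ≤ |cc n i - p.1| + |p.1 - cc n i'| := abs_sub_le _ _ _
            _ = |p.1 - cc n i| + |p.1 - cc n i'| := by rw [abs_sub_comm]
        have := h1.1; have := h2.1
        linarith
    have hy : |p.2 - cc n j| = hh n := by rw [h1.2, habs]
    constructor
    · rcases abs_eq (le_of_lt hpos) |>.mp habs with he | he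
      · right; simp only [Set.mem_singleton_iff]; linarith
      · left; linarith
    · rcases abs_eq (le_of_lt hpos) |>.mp hy with he | he
      · right; simp only [Set.mem_singleton_iff]; linarith
      · left; linarith
  exact measure_mono_null hsub (corners_null n i j)

lemma measurable_cross (n i j : ℕ) : MeasurableSet (cross n i j) :=
  (measurable_dg n i j 1 (by norm_num)).union (measurable_dg n i j (-1) (by norm_num))

/-- measure of a finite union of crosses with distinct indices -/
lemma hmeas_biUnion_cross (n : ℕ) (hn : 1 ≤ n) (F : Finset (ℕ × ℕ)) :
    μH[1] (⋃ p ∈ F, cross n p.1 p.2) = F.card * ENNReal.ofReal (4 * hh n) := by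
  rw [measure_biUnion_finset₀ ?_ (fun p _ => (measurable_cross n p.1 p.2).nullMeasurableSet)]
  · rw [Finset.sum_congr rfl (fun p _ => hmeas_cross n p.1 p.2 hn), Finset.sum_const,
      nsmul_eq_mul]
  · intro p _ q _ hpq
    exact cross_inter_null n hn (by exact fun hc => hpq (by rcases p with ⟨a,b⟩; rcases q with ⟨c,d⟩; simpa using hc))


noncomputable def gammaN (n : ℕ) (x y : ℝ) : ℝ :=
  ∑ i ∈ Finset.Icc 1 n, ∑ j ∈ Finset.Icc 1 n,
    (|x - cc n i| - |y - cc n j|) * (if |x - cc n i| ≤ hh n then 1 else 0) *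
      (if |y - cc n j| ≤ hh n then 1 else 0)

noncomputable def SS (n : ℕ) (x : ℝ) : ℝ :=
  ∑ i ∈ Finset.Icc 1 n, |x - cc n i| * (if |x - cc n i| ≤ hh n then 1 else 0)

noncomputable def NN (n : ℕ) (x : ℝ) : ℝ :=
  ∑ i ∈ Finset.Icc 1 n, (if |x - cc n i| ≤ hh n then (1:ℝ) else 0)

lemma gamma_factor (n : ℕ) (x y : ℝ) :
    gammaN n x y = SS n x * NN n y - NN n x * SS n y := by
  rw [gammaN, SS, NN, SS, NN, Finset.sum_mul_sum, Finset.sum_mul_sum, ← Finset.sum_sub_distrib]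
  refine Finset.sum_congr rfl fun i _ => ?_
  rw [← Finset.sum_sub_distrib]
  refine Finset.sum_congr rfl fun j _ => ?_
  ring

/-- validity in terms of rational bounds -/
lemma valid_iff (n : ℕ) (hn : 1 ≤ n) (i : ℕ) (x : ℝ) :
    |x - cc n i| ≤ hh n ↔ ((i:ℝ) - 1 ≤ n * x ∧ n * x ≤ i) := by
  have hn0 : (0:ℝ) < n := by exact_mod_cast hn
  have key : 2 * (n:ℝ) * (x - cc n i) = 2 * (n * x) - 2 * i + 1 := by
    rw [cc]; field_simp; ring
  have hhn : 2 * (n:ℝ) * hh n = 1 := by rw [hh]; field_simp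
  rw [abs_le]
  constructor
  · rintro ⟨h1, h2⟩
    constructor <;> nlinarith
  · rintro ⟨h1, h2⟩
    constructor <;> nlinarith

lemma valid_abs_eq (n : ℕ) (hn : 1 ≤ n) {i i' : ℕ} {x : ℝ}
    (h1 : |x - cc n i| ≤ hh n) (h2 : |x - cc n i'| ≤ hh n) :
    |x - cc n i| = |x - cc n i'| := by
  have hn0 : (0:ℝ) < n := by exact_mod_cast hn
  rcases eq_or_ne i i' with rfl | hne
  · rfl
  · have hd := cc_dist n hn hne
    have t1 : |cc n i - cc n i'| ≤ |x - cc n i| + |x - cc n i'| := by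
      calc |cc n i - cc n i'| ≤ |cc n i - x| + |x - cc n i'| := abs_sub_le _ _ _
        _ = |x - cc n i| + |x - cc n i'| := by rw [abs_sub_comm]
    have e1 : |x - cc n i| = hh n := by linarith
    have e2 : |x - cc n i'| = hh n := by linarith
    rw [e1, e2]

lemma valid_exists (n : ℕ) (hn : 1 ≤ n) {x : ℝ} (hx : x ∈ Set.Icc (0:ℝ) 1) :
    ∃ i ∈ Finset.Icc 1 n, |x - cc n i| ≤ hh n := by
  have hn0 : (0:ℝ) < n := by exact_mod_cast hn
  rcases eq_or_lt_of_le hx.1 with h0 | h0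
  · refine ⟨1, by simp [hn], ?_⟩
    rw [valid_iff n hn]
    rw [← h0]
    norm_num
  · refine ⟨⌈(n:ℝ) * x⌉₊, ?_, ?_⟩
    · rw [Finset.mem_Icc]
      constructor
      · rw [Nat.one_le_ceil_iff]; positivity
      · exact Nat.ceil_le.mpr (by nlinarith [hx.2])
    · rw [valid_iff n hn]
      refine ⟨?_, Nat.le_ceil _⟩
      have := Nat.ceil_lt_add_one (le_of_lt (by positivity : (0:ℝ) < n * x))
      linarith

lemma SS_eq (n : ℕ) (hn : 1 ≤ n) {i : ℕ} {x : ℝ}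
    (hv : |x - cc n i| ≤ hh n) : SS n x = |x - cc n i| * NN n x := by
  rw [SS, NN, Finset.mul_sum]
  refine Finset.sum_congr rfl fun j _ => ?_
  by_cases hj : |x - cc n j| ≤ hh n
  · simp only [if_pos hj, mul_one]; exact valid_abs_eq n hn hj hv
  · simp only [if_neg hj, mul_zero]

lemma NN_pos (n : ℕ) (hn : 1 ≤ n) {x : ℝ} (hx : x ∈ Set.Icc (0:ℝ) 1) :
    0 < NN n x := by
  obtain ⟨i, hi, hv⟩ := valid_exists n hn hx
  have h1 := Finset.single_le_sum (f := fun j => if |x - cc n j| ≤ hh n then (1:ℝ) else 0)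
    (fun j _ => by beta_reduce; split <;> norm_num) hi
  simp only [if_pos hv] at h1
  rw [NN]
  linarith

/-- the key set identity -/
lemma gamma_zero_iff (n : ℕ) (hn : 1 ≤ n) {x y : ℝ}
    (hx : x ∈ Set.Icc (0:ℝ) 1) (hy : y ∈ Set.Icc (0:ℝ) 1) :
    gammaN n x y = 0 ↔ ∃ i ∈ Finset.Icc 1 n, ∃ j ∈ Finset.Icc 1 n,
      |x - cc n i| ≤ hh n ∧ |y - cc n j| = |x - cc n i| := by
  obtain ⟨i, hi, hvi⟩ := valid_exists n hn hx
  obtain ⟨j, hj, hvj⟩ := valid_exists n hn hy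
  have hfac : gammaN n x y = (|x - cc n i| - |y - cc n j|) * (NN n x * NN n y) := by
    rw [gamma_factor, SS_eq n hn hvi, SS_eq n hn hvj]; ring
  have hNx := NN_pos n hn hx
  have hNy := NN_pos n hn hy
  constructor
  · intro h0
    rw [hfac] at h0
    rcases mul_eq_zero.mp h0 with h | h
    · exact ⟨i, hi, j, hj, hvi, by linarith [sub_eq_zero.mp h]⟩
    · exfalso; rcases mul_eq_zero.mp h with h | h <;> linarith
  · rintro ⟨i', hi', j', hj', hvi', he⟩
    rw [hfac]
    have : |x - cc n i| = |y - cc n j| := by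
      have hvj' : |y - cc n j'| ≤ hh n := by rw [he]; exact hvi'
      rw [valid_abs_eq n hn hvi hvi', ← he, valid_abs_eq n hn hvj' hvj]
    rw [this]; ring

/-- each cross is inside the unit square -/
lemma cross_subset_unit (n : ℕ) (hn : 1 ≤ n) {i j : ℕ}
    (hi : i ∈ Finset.Icc 1 n) (hj : j ∈ Finset.Icc 1 n) :
    cross n i j ⊆ Set.Icc (0:ℝ) 1 ×ˢ Set.Icc (0:ℝ) 1 := by
  have hn0 : (0:ℝ) < n := by exact_mod_cast hn
  rw [Finset.mem_Icc] at hi hj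
  intro p hp
  rw [mem_cross] at hp
  have h1 := (valid_iff n hn i p.1).mp hp.1
  have h2 := (valid_iff n hn j p.2).mp (hp.2.le.trans hp.1)
  have bi1 : (1:ℝ) ≤ i := by exact_mod_cast hi.1
  have bi2 : (i:ℝ) ≤ n := by exact_mod_cast hi.2
  have bj1 : (1:ℝ) ≤ j := by exact_mod_cast hj.1
  have bj2 : (j:ℝ) ≤ n := by exact_mod_cast hj.2
  constructor
  · constructor <;> nlinarith [h1.1, h1.2]
  · constructor <;> nlinarith [h2.1, h2.2]

/-- the main set identity -/
lemma gamma_set_eq (n : ℕ) (hn : 1 ≤ n) :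
    {p : ℝ × ℝ | p ∈ Set.Icc (0:ℝ) 1 ×ˢ Set.Icc (0:ℝ) 1 ∧ gammaN n p.1 p.2 = 0} =
      ⋃ q ∈ Finset.Icc 1 n ×ˢ Finset.Icc 1 n, cross n q.1 q.2 := by
  ext p
  simp only [Set.mem_setOf_eq, Set.mem_iUnion, Finset.mem_product, exists_prop]
  constructor
  · rintro ⟨⟨hx, hy⟩, h0⟩
    obtain ⟨i, hi, j, hj, hv, he⟩ := (gamma_zero_iff n hn hx hy).mp h0
    exact ⟨(i, j), ⟨hi, hj⟩, mem_cross.mpr ⟨hv, he⟩⟩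
  · rintro ⟨⟨i, j⟩, ⟨hi, hj⟩, hp⟩
    have hmem := cross_subset_unit n hn hi hj hp
    rw [mem_cross] at hp
    exact ⟨hmem, (gamma_zero_iff n hn hmem.1 hmem.2).mpr ⟨i, hi, j, hj, hp.1, hp.2⟩⟩


end BexProof

namespace BexProof

lemma bexGamma_eq {d : ℕ} (hd : 1 ≤ d) (x y : ℝ) :
    bexGamma d x y = gammaN (2 ^ (d - 1)) x y := by
  have h2 : (2:ℝ) ^ d = 2 * 2 ^ (d - 1) := by
    rw [← pow_succ']
    congr 1
    omega
  have hne : (2:ℝ) ^ (d - 1) ≠ 0 := by positivity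
  have hhh : hh (2 ^ (d - 1)) = 1 / 2 ^ d := by
    rw [hh, h2]; push_cast; ring
  have hcc : ∀ i : ℕ, ∀ z : ℝ, z - (i : ℝ) / 2 ^ (d - 1) + 1 / 2 ^ d = z - cc (2 ^ (d - 1)) i := by
    intro i z
    rw [cc, h2]
    push_cast
    field_simp
    ring
  rw [bexGamma, gammaN]
  refine Finset.sum_congr rfl fun i _ => Finset.sum_congr rfl fun j _ => ?_
  rw [hcc i x, hcc j y, hhh]

lemma BEX_eq {d : ℕ} (hd : 1 ≤ d) :
    BEX d = ⋃ q ∈ Finset.Icc 1 (2 ^ (d - 1)) ×ˢ Finset.Icc 1 (2 ^ (d - 1)),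
      cross (2 ^ (d - 1)) q.1 q.2 := by
  rw [← gamma_set_eq (2 ^ (d - 1)) Nat.one_le_two_pow]
  ext p
  simp only [BEX, Set.mem_setOf_eq, bexGamma_eq hd]

/-- the two key measure bounds, for `d ≥ 1` with `n = 2^(d-1)` -/
lemma measure_bounds {d : ℕ} (hd : 1 ≤ d) {x y : ℝ}
    (hx : x ∈ Set.Icc (0:ℝ) 1) (hy : y ∈ Set.Icc (0:ℝ) 1) :
    (((⌊(2 ^ (d-1) : ℕ) * x⌋₊ * ⌊(2 ^ (d-1) : ℕ) * y⌋₊ : ℕ) : ℝ≥0∞)) *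
        ENNReal.ofReal (4 * hh (2 ^ (d-1)))
      ≤ μH[1] ((Set.Icc 0 x ×ˢ Set.Icc 0 y) ∩ BEX d) ∧
    μH[1] ((Set.Icc 0 x ×ˢ Set.Icc 0 y) ∩ BEX d)
      ≤ (((⌊(2 ^ (d-1) : ℕ) * x⌋₊ + 1) * (⌊(2 ^ (d-1) : ℕ) * y⌋₊ + 1) : ℕ) : ℝ≥0∞) *
        ENNReal.ofReal (4 * hh (2 ^ (d-1))) := by
  set n : ℕ := 2 ^ (d - 1) with hn
  have hn1 : 1 ≤ n := Nat.one_le_two_pow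
  have hn0 : (0:ℝ) < n := by exact_mod_cast hn1
  set a : ℕ := ⌊(n : ℝ) * x⌋₊ with ha
  set b : ℕ := ⌊(n : ℝ) * y⌋₊ with hb
  have hax : (a : ℝ) ≤ (n:ℝ) * x := Nat.floor_le (mul_nonneg hn0.le hx.1)
  have hby : (b : ℝ) ≤ (n:ℝ) * y := Nat.floor_le (mul_nonneg hn0.le hy.1)
  have han : a ≤ n := by
    have : ((n:ℝ) * x) ≤ (n:ℝ) := by nlinarith [hx.2]
    calc a ≤ ⌊(n:ℝ)⌋₊ := Nat.floor_le_floor this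
      _ = n := Nat.floor_natCast n
  have hbn : b ≤ n := by
    have : ((n:ℝ) * y) ≤ (n:ℝ) := by nlinarith [hy.2]
    calc b ≤ ⌊(n:ℝ)⌋₊ := Nat.floor_le_floor this
      _ = n := Nat.floor_natCast n
  constructor
  · -- lower bound
    have hsub : (⋃ q ∈ Finset.Icc 1 a ×ˢ Finset.Icc 1 b, cross n q.1 q.2)
        ⊆ (Set.Icc 0 x ×ˢ Set.Icc 0 y) ∩ BEX d := by
      intro p hp
      simp only [Set.mem_iUnion, Finset.mem_product, Finset.mem_Icc, exists_prop] at hp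
      obtain ⟨⟨i, j⟩, ⟨⟨hi1, hi2⟩, hj1, hj2⟩, hpc⟩ := hp
      have hic := mem_cross.mp hpc
      have h1 := (valid_iff n hn1 i p.1).mp hic.1
      have h2 := (valid_iff n hn1 j p.2).mp (hic.2.le.trans hic.1)
      have bi1 : (1:ℝ) ≤ i := by exact_mod_cast hi1
      have bi2 : (i:ℝ) ≤ a := by exact_mod_cast hi2
      have bj1 : (1:ℝ) ≤ j := by exact_mod_cast hj1
      have bj2 : (j:ℝ) ≤ b := by exact_mod_cast hj2
      constructor
      · constructor
        · constructor <;> nlinarith [h1.1, h1.2]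
        · constructor <;> nlinarith [h2.1, h2.2]
      · rw [BEX_eq hd, ← hn]
        simp only [Set.mem_iUnion, Finset.mem_product, Finset.mem_Icc, exists_prop]
        exact ⟨(i, j), ⟨⟨hi1, le_trans hi2 han⟩, hj1, le_trans hj2 hbn⟩, hpc⟩
    calc ((a * b : ℕ) : ℝ≥0∞) * ENNReal.ofReal (4 * hh n)
        = ((Finset.Icc 1 a ×ˢ Finset.Icc 1 b).card : ℝ≥0∞) * ENNReal.ofReal (4 * hh n) := by
          rw [Finset.card_product, Nat.card_Icc, Nat.card_Icc]
          norm_num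
      _ = μH[1] (⋃ q ∈ Finset.Icc 1 a ×ˢ Finset.Icc 1 b, cross n q.1 q.2) :=
          (hmeas_biUnion_cross n hn1 _).symm
      _ ≤ _ := measure_mono hsub
  · -- upper bound
    have hsub : (Set.Icc 0 x ×ˢ Set.Icc 0 y) ∩ BEX d
        ⊆ ⋃ q ∈ Finset.Icc 1 (a+1) ×ˢ Finset.Icc 1 (b+1), cross n q.1 q.2 := by
      rintro p ⟨hpR, hpB⟩
      rw [BEX_eq hd, ← hn] at hpB
      simp only [Set.mem_iUnion, Finset.mem_product, Finset.mem_Icc, exists_prop] at hpB ⊢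
      obtain ⟨⟨i, j⟩, ⟨⟨hi1, hi2⟩, hj1, hj2⟩, hpc⟩ := hpB
      have hic := mem_cross.mp hpc
      have h1 := (valid_iff n hn1 i p.1).mp hic.1
      have h2 := (valid_iff n hn1 j p.2).mp (hic.2.le.trans hic.1)
      have hpx : p.1 ≤ x := hpR.1.2
      have hpy : p.2 ≤ y := hpR.2.2
      have hia : i - 1 ≤ a := by
        apply Nat.le_floor
        rw [Nat.cast_sub hi1]
        push_cast
        have hm : (n:ℝ) * p.1 ≤ (n:ℝ) * x := mul_le_mul_of_nonneg_left hpx hn0.le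
        linarith [h1.1]
      have hjb : j - 1 ≤ b := by
        apply Nat.le_floor
        rw [Nat.cast_sub hj1]
        push_cast
        have hm : (n:ℝ) * p.2 ≤ (n:ℝ) * y := mul_le_mul_of_nonneg_left hpy hn0.le
        linarith [h2.1]
      exact ⟨(i, j), ⟨⟨hi1, by omega⟩, hj1, by omega⟩, hpc⟩
    calc μH[1] ((Set.Icc 0 x ×ˢ Set.Icc 0 y) ∩ BEX d)
        ≤ μH[1] (⋃ q ∈ Finset.Icc 1 (a+1) ×ˢ Finset.Icc 1 (b+1), cross n q.1 q.2) :=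
          measure_mono hsub
      _ = (((a+1) * (b+1) : ℕ) : ℝ≥0∞) * ENNReal.ofReal (4 * hh n) := by
          rw [hmeas_biUnion_cross n hn1, Finset.card_product, Nat.card_Icc, Nat.card_Icc]
          norm_num

/-- total measure of the cross set -/
lemma hmeas_BEX {d : ℕ} (hd : 1 ≤ d) :
    μH[1] (BEX d) = ((2 ^ (d-1) * 2 ^ (d-1) : ℕ) : ℝ≥0∞) *
      ENNReal.ofReal (4 * hh (2 ^ (d-1))) := by
  rw [BEX_eq hd, hmeas_biUnion_cross _ Nat.one_le_two_pow, Finset.card_product, Nat.card_Icc]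
  norm_num

/-- the two-sided real bound for the normalized measure, `d ≥ 1` -/
lemma value_bounds {d : ℕ} (hd : 1 ≤ d) {x y : ℝ}
    (hx : x ∈ Set.Icc (0:ℝ) 1) (hy : y ∈ Set.Icc (0:ℝ) 1) :
    ((⌊(2 ^ (d-1) : ℕ) * x⌋₊ * ⌊(2 ^ (d-1) : ℕ) * y⌋₊ : ℕ) : ℝ) / ((2 ^ (d-1) : ℕ) : ℝ)^2
      ≤ (bexMeasure d (Set.Icc 0 x ×ˢ Set.Icc 0 y)).toReal ∧
    (bexMeasure d (Set.Icc 0 x ×ˢ Set.Icc 0 y)).toReal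
      ≤ (((⌊(2 ^ (d-1) : ℕ) * x⌋₊ + 1) * (⌊(2 ^ (d-1) : ℕ) * y⌋₊ + 1) : ℕ) : ℝ) /
        ((2 ^ (d-1) : ℕ) : ℝ)^2 := by
  set n : ℕ := 2 ^ (d - 1) with hn
  have hn1 : 1 ≤ n := Nat.one_le_two_pow
  have hn0 : (0:ℝ) < n := by exact_mod_cast hn1
  have h4 : 4 * hh n = 2 / (n:ℝ) := by rw [hh]; field_simp; ring
  have h4pos : (0:ℝ) < 4 * hh n := by rw [h4]; positivity
  set a : ℕ := ⌊(n : ℝ) * x⌋₊ with ha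
  set b : ℕ := ⌊(n : ℝ) * y⌋₊ with hb
  obtain ⟨hlow, hup⟩ := measure_bounds hd hx hy
  rw [← hn] at hlow hup
  have hRm : MeasurableSet (Set.Icc (0:ℝ) x ×ˢ Set.Icc (0:ℝ) y) :=
    measurableSet_Icc.prod measurableSet_Icc
  have hval : bexMeasure d (Set.Icc 0 x ×ˢ Set.Icc 0 y) =
      (μH[1] (BEX d))⁻¹ * μH[1] ((Set.Icc 0 x ×ˢ Set.Icc 0 y) ∩ BEX d) := by
    rw [bexMeasure, Measure.smul_apply, Measure.restrict_apply hRm, smul_eq_mul]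
  have hupfin : (((a+1) * (b+1) : ℕ) : ℝ≥0∞) * ENNReal.ofReal (4 * hh n) ≠ ∞ := by
    exact ENNReal.mul_ne_top (ENNReal.natCast_ne_top _) ENNReal.ofReal_ne_top
  have hAfin : μH[1] ((Set.Icc 0 x ×ˢ Set.Icc 0 y) ∩ BEX d) ≠ ∞ :=
    ne_top_of_le_ne_top hupfin hup
  have hT : (μH[1] (BEX d)).toReal = (n:ℝ) * n * (4 * hh n) := by
    rw [hmeas_BEX hd, ← hn, ENNReal.toReal_mul, ENNReal.toReal_natCast,
      ENNReal.toReal_ofReal h4pos.le]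
    push_cast
    ring
  have hTpos : (0:ℝ) < (n:ℝ) * n * (4 * hh n) := by positivity
  have hvr : (bexMeasure d (Set.Icc 0 x ×ˢ Set.Icc 0 y)).toReal =
      ((n:ℝ) * n * (4 * hh n))⁻¹ *
        (μH[1] ((Set.Icc 0 x ×ˢ Set.Icc 0 y) ∩ BEX d)).toReal := by
    rw [hval, ENNReal.toReal_mul, ENNReal.toReal_inv, hT]
  have hAlow : ((a * b : ℕ) : ℝ) * (4 * hh n)
      ≤ (μH[1] ((Set.Icc 0 x ×ˢ Set.Icc 0 y) ∩ BEX d)).toReal := by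
    have := ENNReal.toReal_mono hAfin hlow
    rwa [ENNReal.toReal_mul, ENNReal.toReal_natCast, ENNReal.toReal_ofReal h4pos.le] at this
  have hAup : (μH[1] ((Set.Icc 0 x ×ˢ Set.Icc 0 y) ∩ BEX d)).toReal
      ≤ (((a+1) * (b+1) : ℕ) : ℝ) * (4 * hh n) := by
    have := ENNReal.toReal_mono hupfin hup
    rwa [ENNReal.toReal_mul, ENNReal.toReal_natCast, ENNReal.toReal_ofReal h4pos.le] at this
  rw [hvr]
  constructor
  · calc ((a * b : ℕ) : ℝ) / (n:ℝ)^2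
        = ((n:ℝ) * n * (4 * hh n))⁻¹ * (((a * b : ℕ) : ℝ) * (4 * hh n)) := by
          field_simp
          have hh0 : hh n ≠ 0 := ne_of_gt (by linarith)
          field_simp
      _ ≤ _ := by
          apply mul_le_mul_of_nonneg_left hAlow (by positivity)
  · calc ((n:ℝ) * n * (4 * hh n))⁻¹ *
          (μH[1] ((Set.Icc 0 x ×ˢ Set.Icc 0 y) ∩ BEX d)).toReal
        ≤ ((n:ℝ) * n * (4 * hh n))⁻¹ * ((((a+1) * (b+1) : ℕ) : ℝ) * (4 * hh n)) :=
          mul_le_mul_of_nonneg_left hAup (by positivity)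
      _ = (((a+1) * (b+1) : ℕ) : ℝ) / (n:ℝ)^2 := by
          field_simp
          have hh0 : hh n ≠ 0 := ne_of_gt (by linarith)
          field_simp

end BexProof

open BexProof in
/-- The uniform distributions on the bisection expanding crosses converge weakly to
independence: for all `x, y ∈ [0,1]`, `μ_d([0,x] × [0,y]) → x·y` as `d → ∞`. -/
theorem bexMeasure_tendsto_independence (x y : ℝ)
    (hx : x ∈ Set.Icc (0 : ℝ) 1) (hy : y ∈ Set.Icc (0 : ℝ) 1) :
    Filter.Tendsto
      (fun d : ℕ => (bexMeasure d (Set.Icc 0 x ×ˢ Set.Icc 0 y)).toReal)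
      Filter.atTop (nhds (x * y)) := by
  set t : ℕ → ℝ := fun d => ((2 ^ (d - 1) : ℕ) : ℝ) with htdef
  have ht : Filter.Tendsto t Filter.atTop Filter.atTop :=
    tendsto_natCast_atTop_atTop.comp
      ((tendsto_pow_atTop_atTop_of_one_lt one_lt_two).comp
        (Filter.tendsto_sub_atTop_nat 1))
  have hgx : Filter.Tendsto (fun r : ℝ => (⌊r * x⌋₊ : ℝ) / r) Filter.atTop (nhds x) := by
    have := tendsto_nat_floor_mul_div_atTop hx.1
    simpa [mul_comm] using this
  have hgy : Filter.Tendsto (fun r : ℝ => (⌊r * y⌋₊ : ℝ) / r) Filter.atTop (nhds y) := by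
    have := tendsto_nat_floor_mul_div_atTop hy.1
    simpa [mul_comm] using this
  have hinv : Filter.Tendsto (fun r : ℝ => 1 / r) Filter.atTop (nhds 0) := by
    simpa [one_div] using (tendsto_inv_atTop_zero : Filter.Tendsto (fun r : ℝ => r⁻¹) Filter.atTop (nhds 0))
  have hlo : Filter.Tendsto
      (fun d : ℕ => (⌊t d * x⌋₊ : ℝ) / t d * ((⌊t d * y⌋₊ : ℝ) / t d))
      Filter.atTop (nhds (x * y)) :=
    (hgx.comp ht).mul (hgy.comp ht)
  have hhi : Filter.Tendsto
      (fun d : ℕ => ((⌊t d * x⌋₊ : ℝ) / t d + 1 / t d) * ((⌊t d * y⌋₊ : ℝ) / t d + 1 / t d))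
      Filter.atTop (nhds (x * y)) := by
    have := ((hgx.comp ht).add (hinv.comp ht)).mul ((hgy.comp ht).add (hinv.comp ht))
    simpa using this
  refine tendsto_of_tendsto_of_tendsto_of_le_of_le' hlo hhi ?_ ?_
  · filter_upwards [Filter.eventually_ge_atTop 1] with d hd
    have h := (value_bounds hd hx hy).1
    have hn0 : (0:ℝ) < t d := by
      have : (1:ℕ) ≤ 2 ^ (d-1) := Nat.one_le_two_pow
      simp only [htdef]
      exact_mod_cast this
    calc (⌊t d * x⌋₊ : ℝ) / t d * ((⌊t d * y⌋₊ : ℝ) / t d)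
        = ((⌊t d * x⌋₊ * ⌊t d * y⌋₊ : ℕ) : ℝ) / (t d)^2 := by push_cast; ring
      _ ≤ _ := h
  · filter_upwards [Filter.eventually_ge_atTop 1] with d hd
    have h := (value_bounds hd hx hy).2
    have hn0 : (0:ℝ) < t d := by
      have : (1:ℕ) ≤ 2 ^ (d-1) := Nat.one_le_two_pow
      simp only [htdef]
      exact_mod_cast this
    calc (bexMeasure d (Set.Icc 0 x ×ˢ Set.Icc 0 y)).toReal
        ≤ (((⌊t d * x⌋₊ + 1) * (⌊t d * y⌋₊ + 1) : ℕ) : ℝ) / (t d)^2 := h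
      _ = ((⌊t d * x⌋₊ : ℝ) / t d + 1 / t d) * ((⌊t d * y⌋₊ : ℝ) / t d + 1 / t d) := by
          push_cast
          field_simp
end

section
/- Let d1, d2 ≥ 1 and let p : (Fin d1 → Bool) × (Fin d2 → Bool) → ℝ be strictly positive with Σ over all cells of p(a',b') equal to 1 (the joint probability mass function of a pair of binary random vectors). Then the following are equivalent: (i) λ(a,b) = 1 for every nonzero a : Fin d1 → Bool and nonzero b : Fin d2 → Bool (all cross interaction odds ratios equal 1); (ii) p factorizes as a product of its marginals: p(a,b) = (Σ_{b'} p(a,b')) · (Σ_{a'} p(a',b)) for all cells (a,b), i.e., the two binary random vectors are independent. -/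
/-- `#{k : a k = true and x k = false}`, appearing in the sign
`ε((a,b),(a',b')) = (−1)^{#{k : a k ∧ ¬a' k} + #{k : b k ∧ ¬b' k}}`. -/
def conjInner {m : ℕ} (a x : Fin m → Bool) : ℕ :=
  (Finset.univ.filter (fun k => a k = true ∧ x k = false)).card

lemma chi_prod {m : ℕ} (s x : Fin m → Bool) :
    ((-1:ℝ) ^ conjInner s x) =
      ∏ k : Fin m, (if s k = true ∧ x k = false then (-1:ℝ) else 1) := by
  rw [conjInner, ← Finset.prod_const, Finset.prod_filter]

lemma sum_chi_mul {m : ℕ} (a a' : Fin m → Bool) :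
    ∑ s : Fin m → Bool, ((-1:ℝ) ^ conjInner s a) * ((-1:ℝ) ^ conjInner s a') =
      if a = a' then (2:ℝ)^m else 0 := by
  have h : ∀ s : Fin m → Bool, ((-1:ℝ) ^ conjInner s a) * ((-1:ℝ) ^ conjInner s a')
      = ∏ k, ((if s k = true ∧ a k = false then (-1:ℝ) else 1) *
              (if s k = true ∧ a' k = false then (-1:ℝ) else 1)) := by
    intro s; rw [chi_prod, chi_prod, ← Finset.prod_mul_distrib]
  simp_rw [h]
  rw [← Fintype.prod_sum (fun k (b : Bool) =>
    (if b = true ∧ a k = false then (-1:ℝ) else 1) *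
    (if b = true ∧ a' k = false then (-1:ℝ) else 1))]
  have hfac : ∀ k : Fin m, (∑ b : Bool,
      (if b = true ∧ a k = false then (-1:ℝ) else 1) *
      (if b = true ∧ a' k = false then (-1:ℝ) else 1)) =
      if a k = a' k then 2 else 0 := by
    intro k
    cases ha : a k <;> cases ha' : a' k <;> simp [Fintype.sum_bool] <;> norm_num
  simp_rw [hfac]
  by_cases hE : a = a'
  · subst hE; simp
  · rw [if_neg hE]
    have : ∃ k, a k ≠ a' k := by
      by_contra hc; push_neg at hc; exact hE (funext hc)
    obtain ⟨k, hk⟩ := this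
    exact Finset.prod_eq_zero (Finset.mem_univ k) (by simp [hk])

lemma sum_chi {m : ℕ} (s : Fin m → Bool) (hs : ∃ k, s k = true) :
    ∑ x : Fin m → Bool, ((-1:ℝ) ^ conjInner s x) = 0 := by
  simp_rw [chi_prod]
  rw [← Fintype.prod_sum (fun k (b : Bool) => (if s k = true ∧ b = false then (-1:ℝ) else 1))]
  obtain ⟨k0, hk0⟩ := hs
  apply Finset.prod_eq_zero (Finset.mem_univ k0)
  simp [Fintype.sum_bool, hk0]

lemma conjInner_of_zero {m : ℕ} (s x : Fin m → Bool) (hs : ¬ ∃ k, s k = true) :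
    conjInner s x = 0 := by
  push_neg at hs
  simp only [conjInner, Finset.card_eq_zero, Finset.filter_eq_empty_iff]
  intro k _
  simp [hs k]

/-- For a strictly positive joint probability mass function `p` on a
`2^d1 × 2^d2` contingency table, all cross interaction odds ratios
`λ(a,b) = Π_{(a',b')} p(a',b')^{ε((a,b),(a',b'))}` (for nonzero `a` and nonzero `b`)
equal `1` if and only if `p` factorizes as the product of its two marginals, i.e. the
two binary random vectors are independent. -/
theorem cior_one_iff_independent {d1 d2 : ℕ} (hd1 : 1 ≤ d1) (hd2 : 1 ≤ d2)
    (p : (Fin d1 → Bool) × (Fin d2 → Bool) → ℝ) (hp : ∀ c, 0 < p c)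
    (hsum : ∑ c : (Fin d1 → Bool) × (Fin d2 → Bool), p c = 1) :
    (∀ a : Fin d1 → Bool, (∃ k, a k = true) →
      ∀ b : Fin d2 → Bool, (∃ k, b k = true) →
        (∏ c : (Fin d1 → Bool) × (Fin d2 → Bool),
          p c ^ ((-1 : ℤ) ^ (conjInner a c.1 + conjInner b c.2))) = 1) ↔
    (∀ a : Fin d1 → Bool, ∀ b : Fin d2 → Bool,
      p (a, b) = (∑ b' : Fin d2 → Bool, p (a, b')) *
        (∑ a' : Fin d1 → Bool, p (a', b))) := by
  set f : (Fin d1 → Bool) × (Fin d2 → Bool) → ℝ := fun c => Real.log (p c) with hf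
  have hlogprod : ∀ (s : Fin d1 → Bool) (t : Fin d2 → Bool),
      Real.log (∏ c : (Fin d1 → Bool) × (Fin d2 → Bool),
          p c ^ ((-1 : ℤ) ^ (conjInner s c.1 + conjInner t c.2))) =
      ∑ c : (Fin d1 → Bool) × (Fin d2 → Bool),
        ((-1:ℝ) ^ conjInner s c.1) * ((-1:ℝ) ^ conjInner t c.2) * f c := by
    intro s t
    rw [Real.log_prod (fun c _ => zpow_ne_zero _ (hp c).ne')]
    apply Finset.sum_congr rfl
    intro c _
    rw [Real.log_zpow]
    push_cast
    rw [pow_add]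
  constructor
  · intro h a b
    have key : ∀ a a' b b', p (a, b) * p (a', b') = p (a, b') * p (a', b) := by
      intro a a' b b'
      have hS : ∀ (s : Fin d1 → Bool) (t : Fin d2 → Bool), (∃ k, s k = true) →
          (∃ k, t k = true) →
          ∑ c : (Fin d1 → Bool) × (Fin d2 → Bool),
            ((-1:ℝ) ^ conjInner s c.1) * ((-1:ℝ) ^ conjInner t c.2) * f c = 0 := by
        intro s t hs ht
        rw [← hlogprod, h s hs t ht, Real.log_one]
      set A : (Fin d1 → Bool) → ℝ :=
        fun s => (-1:ℝ) ^ conjInner s a - (-1:ℝ) ^ conjInner s a' with hA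
      set B : (Fin d2 → Bool) → ℝ :=
        fun t => (-1:ℝ) ^ conjInner t b - (-1:ℝ) ^ conjInner t b' with hB
      have hzero : ∀ (s : Fin d1 → Bool) (t : Fin d2 → Bool),
          A s * B t * (∑ c : (Fin d1 → Bool) × (Fin d2 → Bool),
            ((-1:ℝ) ^ conjInner s c.1) * ((-1:ℝ) ^ conjInner t c.2) * f c) = 0 := by
        intro s t
        by_cases hs : ∃ k, s k = true
        · by_cases ht : ∃ k, t k = true
          · rw [hS s t hs ht, mul_zero]
          · have : B t = 0 := by
              simp [hB, conjInner_of_zero t b ht, conjInner_of_zero t b' ht]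
            rw [this]; ring
        · have : A s = 0 := by
            simp [hA, conjInner_of_zero s a hs, conjInner_of_zero s a' hs]
          rw [this]; ring
      have hAx : ∀ x, ∑ s : Fin d1 → Bool, A s * ((-1:ℝ) ^ conjInner s x) =
          (if a = x then (2:ℝ)^d1 else 0) - (if a' = x then (2:ℝ)^d1 else 0) := by
        intro x
        simp only [hA, sub_mul]
        rw [Finset.sum_sub_distrib, sum_chi_mul, sum_chi_mul]
      have hBy : ∀ y, ∑ t : Fin d2 → Bool, B t * ((-1:ℝ) ^ conjInner t y) =
          (if b = y then (2:ℝ)^d2 else 0) - (if b' = y then (2:ℝ)^d2 else 0) := by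
        intro y
        simp only [hB, sub_mul]
        rw [Finset.sum_sub_distrib, sum_chi_mul, sum_chi_mul]
      have hrow : ∀ x : Fin d1 → Bool,
          ∑ y : Fin d2 → Bool,
            ((if b = y then (2:ℝ)^d2 else 0) - (if b' = y then (2:ℝ)^d2 else 0)) *
              f (x, y) = (2:ℝ)^d2 * f (x, b) - (2:ℝ)^d2 * f (x, b') := by
        intro x
        simp [sub_mul, ite_mul, Finset.sum_sub_distrib, Finset.sum_ite_eq]
      have inv : (0:ℝ) = (2:ℝ)^d1 * (2:ℝ)^d2 *
          (f (a,b) - f (a,b') - f (a',b) + f (a',b')) := by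
        calc (0:ℝ) = ∑ s : Fin d1 → Bool, ∑ t : Fin d2 → Bool,
              A s * B t * (∑ c : (Fin d1 → Bool) × (Fin d2 → Bool),
                ((-1:ℝ) ^ conjInner s c.1) * ((-1:ℝ) ^ conjInner t c.2) * f c) := by
              simp [hzero]
          _ = ∑ s : Fin d1 → Bool, ∑ t : Fin d2 → Bool,
              ∑ c : (Fin d1 → Bool) × (Fin d2 → Bool),
                (A s * ((-1:ℝ) ^ conjInner s c.1)) *
                ((B t * ((-1:ℝ) ^ conjInner t c.2)) * f c) := by
              simp only [Finset.mul_sum]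
              exact Finset.sum_congr rfl fun s _ => Finset.sum_congr rfl fun t _ =>
                Finset.sum_congr rfl fun c _ => by ring
          _ = ∑ c : (Fin d1 → Bool) × (Fin d2 → Bool),
              ∑ s : Fin d1 → Bool, ∑ t : Fin d2 → Bool,
                (A s * ((-1:ℝ) ^ conjInner s c.1)) *
                ((B t * ((-1:ℝ) ^ conjInner t c.2)) * f c) := by
              rw [show (∑ s : Fin d1 → Bool, ∑ t : Fin d2 → Bool,
                  ∑ c : (Fin d1 → Bool) × (Fin d2 → Bool),
                    (A s * ((-1:ℝ) ^ conjInner s c.1)) *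
                    ((B t * ((-1:ℝ) ^ conjInner t c.2)) * f c)) =
                ∑ s : Fin d1 → Bool, ∑ c : (Fin d1 → Bool) × (Fin d2 → Bool),
                  ∑ t : Fin d2 → Bool,
                    (A s * ((-1:ℝ) ^ conjInner s c.1)) *
                    ((B t * ((-1:ℝ) ^ conjInner t c.2)) * f c)
                from Finset.sum_congr rfl fun s _ => Finset.sum_comm]
              exact Finset.sum_comm
          _ = ∑ c : (Fin d1 → Bool) × (Fin d2 → Bool),
              (∑ s : Fin d1 → Bool, A s * ((-1:ℝ) ^ conjInner s c.1)) *
              ((∑ t : Fin d2 → Bool, B t * ((-1:ℝ) ^ conjInner t c.2)) * f c) := by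
              refine Finset.sum_congr rfl fun c _ => ?_
              rw [Finset.sum_mul]
              refine Finset.sum_congr rfl fun s _ => ?_
              rw [Finset.sum_mul, Finset.mul_sum]
          _ = ∑ x : Fin d1 → Bool,
              ((if a = x then (2:ℝ)^d1 else 0) - (if a' = x then (2:ℝ)^d1 else 0)) *
              (∑ y : Fin d2 → Bool,
                ((if b = y then (2:ℝ)^d2 else 0) - (if b' = y then (2:ℝ)^d2 else 0)) *
                  f (x, y)) := by
              rw [Fintype.sum_prod_type]
              refine Finset.sum_congr rfl fun x _ => ?_
              rw [Finset.mul_sum]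
              exact Finset.sum_congr rfl fun y _ => by rw [hAx, hBy]
          _ = ∑ x : Fin d1 → Bool,
              ((if a = x then (2:ℝ)^d1 else 0) - (if a' = x then (2:ℝ)^d1 else 0)) *
              ((2:ℝ)^d2 * f (x, b) - (2:ℝ)^d2 * f (x, b')) := by
              exact Finset.sum_congr rfl fun x _ => by rw [hrow]
          _ = (2:ℝ)^d1 * 2^d2 *
              (f (a,b) - f (a,b') - f (a',b) + f (a',b')) := by
              simp [sub_mul, mul_sub, ite_mul, Finset.sum_sub_distrib,
                Finset.sum_ite_eq]
              ring
      have hT : f (a,b) + f (a',b') = f (a,b') + f (a',b) := by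
        have h2 : ((2:ℝ)^d1 * (2:ℝ)^d2) ≠ 0 := by positivity
        have h3 := inv.symm
        rw [mul_eq_zero] at h3
        rcases h3 with h' | h'
        · exact absurd h' h2
        · linarith
      have expand : ∀ u v : (Fin d1 → Bool) × (Fin d2 → Bool),
          p u * p v = Real.exp (f u + f v) := by
        intro u v
        rw [Real.exp_add, hf, Real.exp_log (hp u), Real.exp_log (hp v)]
      rw [expand, expand, hT]
    calc p (a, b) = p (a, b) * ∑ c : (Fin d1 → Bool) × (Fin d2 → Bool), p c := by
          rw [hsum, mul_one]
      _ = ∑ c : (Fin d1 → Bool) × (Fin d2 → Bool), p (a, c.2) * p (c.1, b) := by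
          rw [Finset.mul_sum]
          exact Finset.sum_congr rfl (fun c _ => key a c.1 b c.2)
      _ = (∑ b' : Fin d2 → Bool, p (a, b')) * (∑ a' : Fin d1 → Bool, p (a', b)) := by
          rw [Fintype.sum_prod_type, Finset.sum_comm, Finset.sum_mul_sum]
  · intro h a ha b hb
    have hpos : (0:ℝ) < ∏ c : (Fin d1 → Bool) × (Fin d2 → Bool),
        p c ^ ((-1 : ℤ) ^ (conjInner a c.1 + conjInner b c.2)) :=
      Finset.prod_pos (fun c _ => zpow_pos (hp c) _)
    have hu : ∀ x, (0:ℝ) < ∑ b' : Fin d2 → Bool, p (x, b') :=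
      fun x => Finset.sum_pos (fun b' _ => hp (x, b')) Finset.univ_nonempty
    have hv : ∀ y, (0:ℝ) < ∑ a' : Fin d1 → Bool, p (a', y) :=
      fun y => Finset.sum_pos (fun a' _ => hp (a', y)) Finset.univ_nonempty
    have hlog : Real.log (∏ c : (Fin d1 → Bool) × (Fin d2 → Bool),
        p c ^ ((-1 : ℤ) ^ (conjInner a c.1 + conjInner b c.2))) = 0 := by
      rw [hlogprod]
      have hfc : ∀ c : (Fin d1 → Bool) × (Fin d2 → Bool),
          f c = Real.log (∑ b' : Fin d2 → Bool, p (c.1, b')) +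
                Real.log (∑ a' : Fin d1 → Bool, p (a', c.2)) := by
        intro c
        rw [hf]
        show Real.log (p c) = _
        rw [show p c = p (c.1, c.2) from rfl, h c.1 c.2,
          Real.log_mul (hu c.1).ne' (hv c.2).ne']
      simp_rw [hfc]
      rw [Fintype.sum_prod_type]
      have hx : ∀ x : Fin d1 → Bool,
          (∑ y : Fin d2 → Bool, ((-1:ℝ) ^ conjInner a x) * ((-1:ℝ) ^ conjInner b y) *
            (Real.log (∑ b' : Fin d2 → Bool, p (x, b')) +
             Real.log (∑ a' : Fin d1 → Bool, p (a', y)))) =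
          ((-1:ℝ) ^ conjInner a x) *
            (∑ y : Fin d2 → Bool, ((-1:ℝ) ^ conjInner b y) *
               Real.log (∑ a' : Fin d1 → Bool, p (a', y))) := by
        intro x
        have e : ∀ y : Fin d2 → Bool,
            ((-1:ℝ) ^ conjInner a x) * ((-1:ℝ) ^ conjInner b y) *
              (Real.log (∑ b' : Fin d2 → Bool, p (x, b')) +
               Real.log (∑ a' : Fin d1 → Bool, p (a', y))) =
            (((-1:ℝ) ^ conjInner a x) * Real.log (∑ b' : Fin d2 → Bool, p (x, b'))) *
              ((-1:ℝ) ^ conjInner b y) +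
            ((-1:ℝ) ^ conjInner a x) *
              (((-1:ℝ) ^ conjInner b y) *
                Real.log (∑ a' : Fin d1 → Bool, p (a', y))) := fun y => by ring
        simp only [e]
        rw [Finset.sum_add_distrib, ← Finset.mul_sum, ← Finset.mul_sum,
          sum_chi b hb, mul_zero, zero_add]
      simp only [hx]
      rw [← Finset.sum_mul, sum_chi a ha, zero_mul]
    rw [← Real.exp_log hpos, hlog, Real.exp_zero]
end

section
/- Let m ≥ 1 and let X_1,…,X_n be i.i.d. random variables on a probability space, each uniformly distributed over the 2^m vectors in Fin m → Bool. Then for any two distinct nonzero vectors c, c' : Fin m → Bool, the symmetry statistics S_c = Σ_{i=1}^n χ_c(X_i) and S_{c'} = Σ_{i=1}^n χ_{c'}(X_i) are independent random variables. -/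
open MeasureTheory
open scoped ENNReal

/-- `⟨a,x⟩`: the number of coordinates where both `a` and `x` are `true`. -/
def binInner {m : ℕ} (a x : Fin m → Bool) : ℕ :=
  (Finset.univ.filter (fun k => a k = true ∧ x k = true)).card

/-- The Walsh character `χ_a(x) = (-1)^⟨a,x⟩` as a real number. -/
noncomputable def walsh {m : ℕ} (a x : Fin m → Bool) : ℝ :=
  (-1 : ℝ) ^ binInner a x

namespace SymAux
variable {m : ℕ}

def phi (c c' : Fin m → Bool) (v : Fin m → Bool) : ZMod 2 × ZMod 2 :=
  ((binInner c v : ZMod 2), (binInner c' v : ZMod 2))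

lemma binInner_cast (a x : Fin m → Bool) :
    ((binInner a x : ℕ) : ZMod 2)
      = ∑ k, (if a k = true ∧ x k = true then (1 : ZMod 2) else 0) := by
  classical
  unfold binInner
  rw [Finset.card_filter]
  push_cast
  simp

lemma inner_xor (a x u : Fin m → Bool) :
    ((binInner a (fun k => xor (x k) (u k)) : ℕ) : ZMod 2)
      = (binInner a x : ZMod 2) + (binInner a u : ZMod 2) := by
  classical
  rw [binInner_cast, binInner_cast, binInner_cast, ← Finset.sum_add_distrib]
  refine Finset.sum_congr rfl fun k _ => ?_
  cases ha : a k <;> cases hx : x k <;> cases hu : u k <;> simp <;> decide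

lemma phi_xor (c c' : Fin m → Bool) (x u : Fin m → Bool) :
    phi c c' (fun k => xor (x k) (u k)) = phi c c' x + phi c c' u := by
  unfold phi
  rw [Prod.mk_add_mk]
  exact Prod.ext (inner_xor c x u) (inner_xor c' x u)

def e (j : Fin m) : Fin m → Bool := fun k => decide (k = j)

lemma binInner_e (a : Fin m → Bool) (j : Fin m) :
    binInner a (e j) = if a j = true then 1 else 0 := by
  classical
  unfold binInner e
  have h1 : Finset.univ.filter (fun k => a k = true ∧ (decide (k = j)) = true)
      = if a j = true then {j} else ∅ := by
    ext k
    simp only [Finset.mem_filter, Finset.mem_univ, true_and, decide_eq_true_eq]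
    by_cases h : a j = true
    · simp only [h, if_true, Finset.mem_singleton]
      exact ⟨fun ⟨_, hk⟩ => hk, fun hk => by subst hk; exact ⟨h, rfl⟩⟩
    · rw [if_neg h]
      simp only [Finset.notMem_empty, iff_false]
      rintro ⟨hak, rfl⟩; exact h hak
  rw [h1]
  by_cases h : a j = true <;> simp [h]

lemma phi_e (c c' : Fin m → Bool) (j : Fin m) :
    phi c c' (e j) = ((if c j = true then 1 else 0), (if c' j = true then 1 else 0)) := by
  unfold phi
  rw [binInner_e, binInner_e]
  by_cases h : c j = true <;> by_cases h' : c' j = true <;> simp [h, h']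

lemma phi_zero (c c' : Fin m → Bool) : phi c c' (fun _ => false) = (0, 0) := by
  unfold phi binInner
  simp

lemma exists_uw (c c' : Fin m → Bool) (hc : ∃ k, c k = true) (hc' : ∃ k, c' k = true)
    (hne : c ≠ c') :
    ∃ u w : Fin m → Bool, phi c c' u = (1, 0) ∧ phi c c' w = (0, 1) := by
  classical
  by_cases hA : ∃ j, c j = true ∧ c' j = false
  · obtain ⟨j, hj1, hj2⟩ := hA
    have hej : phi c c' (e j) = (1, 0) := by rw [phi_e, hj1, hj2]; simp
    by_cases hB : ∃ j, c j = false ∧ c' j = true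
    · obtain ⟨i, hi1, hi2⟩ := hB
      exact ⟨e j, e i, hej, by rw [phi_e, hi1, hi2]; simp⟩
    · -- no (false,true) coordinate; c' nonzero gives a (true,true) coordinate
      obtain ⟨k, hk⟩ := hc'
      have hck : c k = true := by
        by_contra hcf
        exact hB ⟨k, by simpa using hcf, hk⟩
      refine ⟨e j, fun t => xor (e j t) (e k t), hej, ?_⟩
      rw [phi_xor, hej, phi_e, hck, hk]
      simp only [if_true]
      decide
  · -- no (true,false) coordinate
    have hB : ∃ j, c j = false ∧ c' j = true := by
      by_contra hB
      apply hne
      funext j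
      rcases hcj : c j with _ | _ <;> rcases hcj' : c' j with _ | _
      · rfl
      · exact absurd ⟨j, hcj, hcj'⟩ hB
      · exact absurd ⟨j, hcj, hcj'⟩ hA
      · rfl
    obtain ⟨j, hj1, hj2⟩ := hB
    have hej : phi c c' (e j) = (0, 1) := by rw [phi_e, hj1, hj2]; simp
    obtain ⟨k, hk⟩ := hc
    have hck : c' k = true := by
      by_contra hcf
      exact hA ⟨k, hk, by simpa using hcf⟩
    refine ⟨fun t => xor (e j t) (e k t), e j, ?_, hej⟩
    rw [phi_xor, hej, phi_e, hck, hk]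
    simp only [if_true]
    decide

lemma phi_surj (c c' : Fin m → Bool) (hc : ∃ k, c k = true) (hc' : ∃ k, c' k = true)
    (hne : c ≠ c') (p : ZMod 2 × ZMod 2) : ∃ d, phi c c' d = p := by
  obtain ⟨u, w, hu, hw⟩ := exists_uw c c' hc hc' hne
  have hp : p = (0, 0) ∨ p = (1, 0) ∨ p = (0, 1) ∨ p = (1, 1) := by
    revert p; decide
  rcases hp with rfl | rfl | rfl | rfl
  · exact ⟨fun _ => false, phi_zero c c'⟩
  · exact ⟨u, hu⟩
  · exact ⟨w, hw⟩
  · exact ⟨fun k => xor (u k) (w k), by rw [phi_xor, hu, hw]; decide⟩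

lemma fiber_card_eq (c c' : Fin m → Bool) (hc : ∃ k, c k = true) (hc' : ∃ k, c' k = true)
    (hne : c ≠ c') (p q : ZMod 2 × ZMod 2) :
    (Finset.univ.filter (fun v => phi c c' v = p)).card
      = (Finset.univ.filter (fun v => phi c c' v = q)).card := by
  classical
  obtain ⟨d, hd⟩ := phi_surj c c' hc hc' hne (p + q)
  have key : ∀ a b : ZMod 2 × ZMod 2, a + (a + b) = b := by decide
  have hinv : ∀ x : Fin m → Bool, (fun k => xor (xor (x k) (d k)) (d k)) = x := by
    intro x; funext k; simp [Bool.xor_assoc]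
  refine Finset.card_bij' (fun x _ => fun k => xor (x k) (d k))
    (fun x _ => fun k => xor (x k) (d k)) ?_ ?_ ?_ ?_
  · intro x hx
    simp only [Finset.mem_filter, Finset.mem_univ, true_and] at hx ⊢
    rw [phi_xor, hx, hd, key]
  · intro x hx
    simp only [Finset.mem_filter, Finset.mem_univ, true_and] at hx ⊢
    rw [phi_xor, hx, hd]
    have : ∀ a b : ZMod 2 × ZMod 2, b + (a + b) = a := by decide
    rw [this]
  · intro x _; exact hinv x
  · intro x _; exact hinv x

lemma pow_neg_one_mod (N : ℕ) : (-1 : ℝ) ^ N = (-1 : ℝ) ^ ((N : ZMod 2)).val := by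
  rw [ZMod.val_natCast]
  conv_lhs => rw [← Nat.div_add_mod N 2]
  rw [pow_add, pow_mul]
  norm_num

lemma walsh_mem_iff (a v : Fin m → Bool) (s : Set ℝ) :
    walsh a v ∈ s ↔ (-1 : ℝ) ^ ((binInner a v : ZMod 2)).val ∈ s := by
  rw [walsh, pow_neg_one_mod]

open Classical in
lemma count_mul (c c' : Fin m → Bool) (hc : ∃ k, c k = true) (hc' : ∃ k, c' k = true)
    (hne : c ≠ c') (s t : Set ℝ) :
    (Finset.univ.filter (fun v : Fin m → Bool => walsh c v ∈ s ∧ walsh c' v ∈ t)).card * 2 ^ m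
      = (Finset.univ.filter (fun v : Fin m → Bool => walsh c v ∈ s)).card
        * (Finset.univ.filter (fun v : Fin m → Bool => walsh c' v ∈ t)).card := by
  classical
  set K := (Finset.univ.filter (fun v : Fin m → Bool => phi c c' v = (0, 0))).card with hKdef
  have hfib : ∀ p : ZMod 2 × ZMod 2,
      (Finset.univ.filter (fun v => phi c c' v = p)).card = K :=
    fun p => fiber_card_eq c c' hc hc' hne p (0, 0)
  have htot : 4 * K = 2 ^ m := by
    have h1 : (Finset.univ : Finset (Fin m → Bool)).card
        = ∑ p : ZMod 2 × ZMod 2, (Finset.univ.filter (fun v => phi c c' v = p)).card :=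
      Finset.card_eq_sum_card_fiberwise (fun v _ => Finset.mem_univ _)
    rw [Finset.card_univ, Fintype.card_fun] at h1
    simp only [hfib, Finset.sum_const, Finset.card_univ, smul_eq_mul] at h1
    have h2 : Fintype.card (ZMod 2 × ZMod 2) = 4 := by decide
    rw [h2] at h1
    simp only [Fintype.card_fin, Fintype.card_bool] at h1
    omega
  set Sa := (Finset.univ : Finset (ZMod 2)).filter (fun b => (-1 : ℝ) ^ b.val ∈ s) with hSa
  set Sb := (Finset.univ : Finset (ZMod 2)).filter (fun b => (-1 : ℝ) ^ b.val ∈ t) with hSb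
  have hcardA : (Finset.univ.filter (fun v : Fin m → Bool => walsh c v ∈ s)).card
      = Sa.card * 2 * K := by
    have h1 : (Finset.univ.filter (fun v : Fin m → Bool => walsh c v ∈ s)).card
        = ∑ p ∈ Sa ×ˢ (Finset.univ : Finset (ZMod 2)),
            ((Finset.univ.filter (fun v : Fin m → Bool => walsh c v ∈ s)).filter
              (fun v => phi c c' v = p)).card := by
      refine Finset.card_eq_sum_card_fiberwise (fun v hv => ?_)
      simp only [Finset.mem_coe, Finset.mem_filter, Finset.mem_univ, true_and] at hv
      rw [Finset.mem_coe, Finset.mem_product]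
      refine ⟨?_, Finset.mem_univ _⟩
      rw [hSa, Finset.mem_filter]
      exact ⟨Finset.mem_univ _, (walsh_mem_iff c v s).mp hv⟩
    rw [h1]
    have h2 : ∀ p ∈ Sa ×ˢ (Finset.univ : Finset (ZMod 2)),
        ((Finset.univ.filter (fun v : Fin m → Bool => walsh c v ∈ s)).filter
          (fun v => phi c c' v = p)).card = K := by
      intro p hp
      rw [Finset.mem_product, hSa, Finset.mem_filter] at hp
      rw [← hfib p]
      congr 1
      rw [Finset.filter_filter]
      apply Finset.filter_congr
      intro v _
      constructor
      · exact fun h => h.2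
      · intro h
        refine ⟨?_, h⟩
        rw [walsh_mem_iff]
        have : (binInner c v : ZMod 2) = p.1 := by rw [show (binInner c v : ZMod 2) = (phi c c' v).1 from rfl, h]
        rw [this]
        exact hp.1.2
    rw [Finset.sum_congr rfl h2, Finset.sum_const, Finset.card_product, Finset.card_univ]
    have : Fintype.card (ZMod 2) = 2 := by decide
    rw [this, smul_eq_mul]
  have hcardB : (Finset.univ.filter (fun v : Fin m → Bool => walsh c' v ∈ t)).card
      = Sb.card * 2 * K := by
    have h1 : (Finset.univ.filter (fun v : Fin m → Bool => walsh c' v ∈ t)).card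
        = ∑ p ∈ (Finset.univ : Finset (ZMod 2)) ×ˢ Sb,
            ((Finset.univ.filter (fun v : Fin m → Bool => walsh c' v ∈ t)).filter
              (fun v => phi c c' v = p)).card := by
      refine Finset.card_eq_sum_card_fiberwise (fun v hv => ?_)
      simp only [Finset.mem_coe, Finset.mem_filter, Finset.mem_univ, true_and] at hv
      rw [Finset.mem_coe, Finset.mem_product]
      refine ⟨Finset.mem_univ _, ?_⟩
      rw [hSb, Finset.mem_filter]
      exact ⟨Finset.mem_univ _, (walsh_mem_iff c' v t).mp hv⟩
    rw [h1]
    have h2 : ∀ p ∈ (Finset.univ : Finset (ZMod 2)) ×ˢ Sb,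
        ((Finset.univ.filter (fun v : Fin m → Bool => walsh c' v ∈ t)).filter
          (fun v => phi c c' v = p)).card = K := by
      intro p hp
      rw [Finset.mem_product, hSb, Finset.mem_filter] at hp
      rw [← hfib p]
      congr 1
      rw [Finset.filter_filter]
      apply Finset.filter_congr
      intro v _
      constructor
      · exact fun h => h.2
      · intro h
        refine ⟨?_, h⟩
        rw [walsh_mem_iff]
        have : (binInner c' v : ZMod 2) = p.2 := by
          rw [show (binInner c' v : ZMod 2) = (phi c c' v).2 from rfl, h]
        rw [this]
        exact hp.2.2
    rw [Finset.sum_congr rfl h2, Finset.sum_const, Finset.card_product, Finset.card_univ]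
    have : Fintype.card (ZMod 2) = 2 := by decide
    rw [this, smul_eq_mul, mul_comm (2 : ℕ) Sb.card]
  have hcardAB : (Finset.univ.filter
        (fun v : Fin m → Bool => walsh c v ∈ s ∧ walsh c' v ∈ t)).card
      = Sa.card * Sb.card * K := by
    have h1 : (Finset.univ.filter
          (fun v : Fin m → Bool => walsh c v ∈ s ∧ walsh c' v ∈ t)).card
        = ∑ p ∈ Sa ×ˢ Sb,
            ((Finset.univ.filter
              (fun v : Fin m → Bool => walsh c v ∈ s ∧ walsh c' v ∈ t)).filter
              (fun v => phi c c' v = p)).card := by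
      refine Finset.card_eq_sum_card_fiberwise (fun v hv => ?_)
      simp only [Finset.mem_coe, Finset.mem_filter, Finset.mem_univ, true_and] at hv
      rw [Finset.mem_coe, Finset.mem_product]
      constructor
      · rw [hSa, Finset.mem_filter]
        exact ⟨Finset.mem_univ _, (walsh_mem_iff c v s).mp hv.1⟩
      · rw [hSb, Finset.mem_filter]
        exact ⟨Finset.mem_univ _, (walsh_mem_iff c' v t).mp hv.2⟩
    rw [h1]
    have h2 : ∀ p ∈ Sa ×ˢ Sb,
        ((Finset.univ.filter
          (fun v : Fin m → Bool => walsh c v ∈ s ∧ walsh c' v ∈ t)).filter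
          (fun v => phi c c' v = p)).card = K := by
      intro p hp
      rw [Finset.mem_product, hSa, hSb, Finset.mem_filter, Finset.mem_filter] at hp
      rw [← hfib p]
      congr 1
      rw [Finset.filter_filter]
      apply Finset.filter_congr
      intro v _
      constructor
      · exact fun h => h.2
      · intro h
        refine ⟨⟨?_, ?_⟩, h⟩
        · rw [walsh_mem_iff]
          have : (binInner c v : ZMod 2) = p.1 := by
            rw [show (binInner c v : ZMod 2) = (phi c c' v).1 from rfl, h]
          rw [this]
          exact hp.1.2
        · rw [walsh_mem_iff]
          have : (binInner c' v : ZMod 2) = p.2 := by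
            rw [show (binInner c' v : ZMod 2) = (phi c c' v).2 from rfl, h]
          rw [this]
          exact hp.2.2
    rw [Finset.sum_congr rfl h2, Finset.sum_const, Finset.card_product, smul_eq_mul]
  rw [hcardA, hcardB, hcardAB, ← htot]
  ring

lemma measure_preimage_unif {Ω : Type*} [MeasurableSpace Ω] (P : Measure Ω) {m : ℕ}
    (Y : Ω → Fin m → Bool) (hY : Measurable Y)
    (hunif : ∀ v, P {ω | Y ω = v} = ((2 : ℝ≥0∞) ^ m)⁻¹) (A : Set (Fin m → Bool)) :
    P (Y ⁻¹' A) = (Set.toFinite A).toFinset.card * ((2 : ℝ≥0∞) ^ m)⁻¹ := by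
  classical
  have h1 : Y ⁻¹' A = ⋃ v ∈ (Set.toFinite A).toFinset, Y ⁻¹' {v} := by
    ext ω
    simp only [Set.mem_preimage, Set.mem_iUnion, Set.Finite.mem_toFinset,
      Set.mem_singleton_iff, exists_prop]
    exact ⟨fun h => ⟨Y ω, h, rfl⟩, fun ⟨v, hv, he⟩ => he ▸ hv⟩
  rw [h1, measure_biUnion_finset ?_ (fun v _ => hY (measurableSet_singleton v))]
  · have h2 : ∀ v, Y ⁻¹' {v} = {ω | Y ω = v} := fun v => rfl
    simp only [h2, hunif]
    rw [Finset.sum_const, nsmul_eq_mul]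
  · intro a _ b _ hab
    simp only [Function.onFun]
    rw [Set.disjoint_left]
    rintro ω ha hb
    exact hab ((Set.mem_preimage.mp ha).symm.trans (Set.mem_preimage.mp hb))

lemma key_indep {Ω : Type*} [MeasurableSpace Ω] (P : Measure Ω) {m : ℕ}
    (Y : Ω → Fin m → Bool) (hY : Measurable Y)
    (hunif : ∀ v, P {ω | Y ω = v} = ((2 : ℝ≥0∞) ^ m)⁻¹)
    (c c' : Fin m → Bool) (hc : ∃ k, c k = true) (hc' : ∃ k, c' k = true)
    (hne : c ≠ c') (s t : Set ℝ) :
    P ((fun ω => walsh c (Y ω)) ⁻¹' s ∩ (fun ω => walsh c' (Y ω)) ⁻¹' t)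
      = P ((fun ω => walsh c (Y ω)) ⁻¹' s) * P ((fun ω => walsh c' (Y ω)) ⁻¹' t) := by
  classical
  have e1 : (fun ω => walsh c (Y ω)) ⁻¹' s = Y ⁻¹' {v | walsh c v ∈ s} := rfl
  have e2 : (fun ω => walsh c' (Y ω)) ⁻¹' t = Y ⁻¹' {v | walsh c' v ∈ t} := rfl
  have e12 : (fun ω => walsh c (Y ω)) ⁻¹' s ∩ (fun ω => walsh c' (Y ω)) ⁻¹' t
      = Y ⁻¹' {v | walsh c v ∈ s ∧ walsh c' v ∈ t} := by
    ext ω; simp [Set.mem_preimage]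
  rw [e12, e1, e2, measure_preimage_unif P Y hY hunif, measure_preimage_unif P Y hY hunif,
    measure_preimage_unif P Y hY hunif]
  have hconv : ∀ (p : (Fin m → Bool) → Prop) [DecidablePred p],
      (Set.toFinite {v | p v}).toFinset = Finset.univ.filter p := by
    intro p _
    ext v
    simp [Set.Finite.mem_toFinset]
  rw [hconv, hconv, hconv]
  have hcount := count_mul c c' hc hc' hne s t
  set cAB := (Finset.univ.filter
    (fun v : Fin m → Bool => walsh c v ∈ s ∧ walsh c' v ∈ t)).card
  set cA := (Finset.univ.filter (fun v : Fin m → Bool => walsh c v ∈ s)).card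
  set cB := (Finset.univ.filter (fun v : Fin m → Bool => walsh c' v ∈ t)).card
  have h2 : ((2 : ℝ≥0∞) ^ m) ≠ 0 := by positivity
  have h3 : ((2 : ℝ≥0∞) ^ m) ≠ ∞ := by
    exact ENNReal.pow_ne_top (by norm_num)
  have hcast : (cAB : ℝ≥0∞) * (2 : ℝ≥0∞) ^ m = (cA : ℝ≥0∞) * (cB : ℝ≥0∞) := by
    have := congrArg (fun k : ℕ => (k : ℝ≥0∞)) hcount
    push_cast at this ⊢
    exact this
  calc (cAB : ℝ≥0∞) * ((2 : ℝ≥0∞) ^ m)⁻¹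
      = (cAB : ℝ≥0∞) * ((2 : ℝ≥0∞) ^ m)⁻¹ * ((2 : ℝ≥0∞) ^ m * ((2 : ℝ≥0∞) ^ m)⁻¹) := by
        rw [ENNReal.mul_inv_cancel h2 h3, mul_one]
    _ = ((cAB : ℝ≥0∞) * (2 : ℝ≥0∞) ^ m) * (((2 : ℝ≥0∞) ^ m)⁻¹ * ((2 : ℝ≥0∞) ^ m)⁻¹) := by ring
    _ = ((cA : ℝ≥0∞) * (cB : ℝ≥0∞)) * (((2 : ℝ≥0∞) ^ m)⁻¹ * ((2 : ℝ≥0∞) ^ m)⁻¹) := by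
        rw [hcast]
    _ = (cA : ℝ≥0∞) * ((2 : ℝ≥0∞) ^ m)⁻¹ * ((cB : ℝ≥0∞) * ((2 : ℝ≥0∞) ^ m)⁻¹) := by ring

end SymAux

/-- For i.i.d. uniform binary random vectors `X_1, …, X_n` and distinct nonzero indices
`c ≠ c'`, the symmetry statistics `S_c = Σ_i χ_c(X_i)` and `S_{c'} = Σ_i χ_{c'}(X_i)`
are independent random variables. -/
theorem symmetry_statistics_pairwise_independent {Ω : Type*} [MeasurableSpace Ω]
    (P : Measure Ω) [IsProbabilityMeasure P]
    {m n : ℕ} (hm : 1 ≤ m)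
    (X : Fin n → Ω → Fin m → Bool)
    (hmeas : ∀ i, Measurable (X i))
    (hindep : ProbabilityTheory.iIndepFun X P)
    (hunif : ∀ i, ∀ v : Fin m → Bool, P {ω | X i ω = v} = ((2 : ℝ≥0∞) ^ m)⁻¹)
    (c c' : Fin m → Bool) (hc : ∃ k, c k = true) (hc' : ∃ k, c' k = true)
    (hne : c ≠ c') :
    ProbabilityTheory.IndepFun (fun ω => ∑ i : Fin n, walsh c (X i ω))
      (fun ω => ∑ i : Fin n, walsh c' (X i ω)) P := by
  classical
  set f : Fin n → Ω → ℝ := fun i ω => walsh c (X i ω) with hf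
  set g : Fin n → Ω → ℝ := fun i ω => walsh c' (X i ω) with hg
  set Z : Fin n ⊕ Fin n → Ω → ℝ := Sum.elim f g with hZdef
  have hZmeas : ∀ s, Measurable (Z s) := by
    rintro (i | i)
    · exact (measurable_of_countable (walsh c)).comp (hmeas i)
    · exact (measurable_of_countable (walsh c')).comp (hmeas i)
  have hiZ : ProbabilityTheory.iIndepFun Z P := by
    rw [ProbabilityTheory.iIndepFun_iff_measure_inter_preimage_eq_mul]
    intro S sets hsets
    set B : Fin n → Set (Fin m → Bool) := fun i =>
      (if Sum.inl i ∈ S then walsh c ⁻¹' sets (Sum.inl i) else Set.univ) ∩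
      (if Sum.inr i ∈ S then walsh c' ⁻¹' sets (Sum.inr i) else Set.univ) with hB
    have hEq : (⋂ s ∈ S, Z s ⁻¹' sets s)
        = ⋂ i ∈ (Finset.univ : Finset (Fin n)), X i ⁻¹' B i := by
      ext ω
      simp only [Set.mem_iInter, Set.mem_preimage, Finset.mem_univ, Set.mem_inter_iff,
        forall_true_left, hB]
      constructor
      · intro h i
        constructor
        · by_cases h1 : Sum.inl i ∈ S
          · rw [if_pos h1]; exact h _ h1
          · rw [if_neg h1]; trivial
        · by_cases h2 : Sum.inr i ∈ S
          · rw [if_pos h2]; exact h _ h2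
          · rw [if_neg h2]; trivial
      · intro h s hs
        rcases s with i | i
        · have := (h i).1
          rw [if_pos hs] at this
          exact this
        · have := (h i).2
          rw [if_pos hs] at this
          exact this
    rw [hEq, hindep.measure_inter_preimage_eq_mul Finset.univ
      (fun i _ => (Set.toFinite (B i)).measurableSet)]
    have hfac : ∀ i : Fin n, P (X i ⁻¹' B i)
        = (if Sum.inl i ∈ S then P (f i ⁻¹' sets (Sum.inl i)) else 1)
          * (if Sum.inr i ∈ S then P (g i ⁻¹' sets (Sum.inr i)) else 1) := by
      intro i
      by_cases h1 : Sum.inl i ∈ S <;> by_cases h2 : Sum.inr i ∈ S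
      · rw [if_pos h1, if_pos h2]
        simp only [hB, if_pos h1, if_pos h2]
        rw [Set.preimage_inter]
        exact SymAux.key_indep P (X i) (hmeas i) (hunif i) c c' hc hc' hne _ _
      · rw [if_pos h1, if_neg h2, mul_one]
        simp only [hB, if_pos h1, if_neg h2, Set.inter_univ]
        rfl
      · rw [if_neg h1, if_pos h2, one_mul]
        simp only [hB, if_neg h1, if_pos h2, Set.univ_inter]
        rfl
      · rw [if_neg h1, if_neg h2, mul_one]
        simp only [hB, if_neg h1, if_neg h2, Set.univ_inter, Set.preimage_univ]
        exact measure_univ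
    rw [Finset.prod_congr rfl (fun i _ => hfac i), Finset.prod_mul_distrib]
    have hsplit : ∏ s ∈ S, P (Z s ⁻¹' sets s)
        = (∏ i : Fin n, if Sum.inl i ∈ S then P (f i ⁻¹' sets (Sum.inl i)) else 1)
          * (∏ i : Fin n, if Sum.inr i ∈ S then P (g i ⁻¹' sets (Sum.inr i)) else 1) := by
      rw [← Fintype.prod_ite_mem S (fun s => P (Z s ⁻¹' sets s)), Fintype.prod_sum_type]
      rfl
    rw [hsplit]
  -- now conclude
  set Sl : Finset (Fin n ⊕ Fin n) := Finset.univ.image Sum.inl with hSl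
  set Sr : Finset (Fin n ⊕ Fin n) := Finset.univ.image Sum.inr with hSr
  have hdisj : Disjoint Sl Sr := by
    rw [Finset.disjoint_left]
    intro s hs ht
    rw [hSl] at hs
    rw [hSr] at ht
    simp only [Finset.mem_image, Finset.mem_univ, true_and] at hs ht
    obtain ⟨a, rfl⟩ := hs
    obtain ⟨b, hb⟩ := ht
    exact Sum.inr_ne_inl hb
  have hfin := hiZ.indepFun_finset Sl
    Sr hdisj hZmeas
  have hsum1 : Measurable fun v : Sl → ℝ =>
      ∑ j, v j := by
    exact Finset.measurable_sum Finset.univ (fun j _ => measurable_pi_apply j)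
  have hsum2 : Measurable fun v : Sr → ℝ =>
      ∑ j, v j := by
    exact Finset.measurable_sum Finset.univ (fun j _ => measurable_pi_apply j)
  have hcomp := hfin.comp hsum1 hsum2
  have he1 : ((fun v : Sl → ℝ => ∑ j, v j)
      ∘ (fun a (i : Sl) => Z i a))
      = fun ω => ∑ i : Fin n, walsh c (X i ω) := by
    funext ω
    simp only [Function.comp_apply]
    rw [Finset.sum_coe_sort _ (fun s => Z s ω), hSl,
      Finset.sum_image (fun a _ b _ h => Sum.inl.inj h)]
    rfl
  have he2 : ((fun v : Sr → ℝ => ∑ j, v j)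
      ∘ (fun a (i : Sr) => Z i a))
      = fun ω => ∑ i : Fin n, walsh c' (X i ω) := by
    funext ω
    simp only [Function.comp_apply]
    rw [Finset.sum_coe_sort _ (fun s => Z s ω), hSr,
      Finset.sum_image (fun a _ b _ h => Sum.inr.inj h)]
    rfl
  rw [← he1, ← he2]
  exact hcomp
end

section
/- Let n ≥ 2 and let f, f', g, g' : Fin n → ℝ satisfy Σ_i f(i) = Σ_i f'(i) = Σ_i g(i) = Σ_i g'(i) = 0 and (Σ_i f(i)·f'(i)) · (Σ_i g(i)·g'(i)) = 0. Let π be a uniformly distributed random permutation of Fin n. Then E[(Σ_i f(i)·g(π(i))) · (Σ_j f'(j)·g'(π(j)))] = 0; i.e., the two permutation statistics Σ_i f(i)·g(π(i)) and Σ_j f'(j)·g'(π(j)) are uncorrelated (each having mean zero). -/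
lemma exists_perm_two {n : ℕ} (i j i' j' : Fin n) (hij : i ≠ j) (hij' : i' ≠ j') :
    ∃ τ : Equiv.Perm (Fin n), τ i = i' ∧ τ j = j' := by
  refine ⟨Equiv.swap (Equiv.swap i i' j) j' * Equiv.swap i i', ?_, ?_⟩
  · have h1 : i' ≠ Equiv.swap i i' j := by
      intro h
      apply hij
      have : Equiv.swap i i' i = Equiv.swap i i' j := by
        rw [Equiv.swap_apply_left]; exact h
      exact (Equiv.swap i i').injective this
    simp only [Equiv.Perm.mul_apply, Equiv.swap_apply_left]
    exact Equiv.swap_apply_of_ne_of_ne h1 hij'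
  · simp [Equiv.Perm.mul_apply, Equiv.swap_apply_left]

lemma C_offdiag {n : ℕ} (g g' : Fin n → ℝ) (i j i' j' : Fin n) (hij : i ≠ j) (hij' : i' ≠ j') :
    ∑ π : Equiv.Perm (Fin n), g (π i) * g' (π j)
      = ∑ π : Equiv.Perm (Fin n), g (π i') * g' (π j') := by
  obtain ⟨τ, h1, h2⟩ := exists_perm_two i j i' j' hij hij'
  exact (Fintype.sum_equiv (Equiv.mulRight τ)
    (fun π => g (π i') * g' (π j'))
    (fun π => g (π i) * g' (π j))
    (fun π => by simp [Equiv.Perm.mul_apply, h1, h2])).symm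

lemma C_diag {n : ℕ} (g g' : Fin n → ℝ) (i i' : Fin n) :
    ∑ π : Equiv.Perm (Fin n), g (π i) * g' (π i)
      = ∑ π : Equiv.Perm (Fin n), g (π i') * g' (π i') := by
  exact (Fintype.sum_equiv (Equiv.mulRight (Equiv.swap i' i))
    (fun π => g (π i') * g' (π i'))
    (fun π => g (π i) * g' (π i))
    (fun π => by simp [Equiv.Perm.mul_apply, Equiv.swap_apply_right])).symm


/-- Under the uniform permutation null, two mean-zero permutation statistics
`Σ_i f(i)·g(π(i))` and `Σ_j f'(j)·g'(π(j))` built from centered score functions with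
`(Σ f·f')·(Σ g·g') = 0` are uncorrelated: the expectation (over a uniformly random
permutation `π` of `Fin n`) of their product vanishes. -/
theorem permutation_statistics_uncorrelated {n : ℕ} (hn : 2 ≤ n)
    (f f' g g' : Fin n → ℝ)
    (hf : ∑ i, f i = 0) (hf' : ∑ i, f' i = 0)
    (hg : ∑ i, g i = 0) (hg' : ∑ i, g' i = 0)
    (horth : (∑ i, f i * f' i) * (∑ i, g i * g' i) = 0) :
    ((Nat.factorial n : ℝ))⁻¹ *
      ∑ π : Equiv.Perm (Fin n),
        (∑ i, f i * g (π i)) * (∑ j, f' j * g' (π j)) = 0 := by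
  set S := ∑ i, g i * g' i with hS
  set T := ∑ i, f i * f' i with hT
  have h0 : (0 : ℕ) < n := by omega
  have h1 : (1 : ℕ) < n := by omega
  set i0 : Fin n := ⟨0, h0⟩
  set i1 : Fin n := ⟨1, h1⟩
  have hi01 : i0 ≠ i1 := by simp [i0, i1, Fin.ext_iff]
  set a := ∑ π : Equiv.Perm (Fin n), g (π i0) * g' (π i0) with ha
  set b := ∑ π : Equiv.Perm (Fin n), g (π i0) * g' (π i1) with hb
  -- C values
  have hC : ∀ i j : Fin n, (∑ π : Equiv.Perm (Fin n), g (π i) * g' (π j))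
      = (if i = j then a - b else 0) + b := by
    intro i j
    by_cases h : i = j
    · subst h
      rw [if_pos rfl, sub_add_cancel]
      exact C_diag g g' i i0
    · simp only [if_neg h, zero_add]
      exact C_offdiag g g' i j i0 i1 h hi01
  -- expand the big sum
  have expand : (∑ π : Equiv.Perm (Fin n),
        (∑ i, f i * g (π i)) * (∑ j, f' j * g' (π j)))
      = ∑ i, ∑ j, (f i * f' j) * ∑ π : Equiv.Perm (Fin n), g (π i) * g' (π j) := by
    simp_rw [Finset.sum_mul_sum, Finset.mul_sum]
    rw [Finset.sum_comm]
    refine Finset.sum_congr rfl fun i _ => ?_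
    rw [Finset.sum_comm]
    exact Finset.sum_congr rfl fun j _ => Finset.sum_congr rfl fun π _ => by ring
  -- total = T * (a - b)
  have total : (∑ π : Equiv.Perm (Fin n),
        (∑ i, f i * g (π i)) * (∑ j, f' j * g' (π j))) = T * (a - b) := by
    rw [expand]
    simp_rw [hC, mul_add, mul_ite, mul_zero, Finset.sum_add_distrib,
      Finset.sum_ite_eq, Finset.mem_univ, if_pos]
    have h2 : ∑ i, ∑ j, f i * f' j * b = 0 := by
      simp_rw [mul_assoc, ← Finset.mul_sum, ← Finset.sum_mul, hf]
      simp
    rw [h2, add_zero, ← Finset.sum_mul, ← hT]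
  -- n * a = n! * S
  have hna : (n : ℝ) * a = (Nat.factorial n : ℝ) * S := by
    have hrow : ∑ i : Fin n, (∑ π : Equiv.Perm (Fin n), g (π i) * g' (π i))
        = (Nat.factorial n : ℝ) * S := by
      rw [Finset.sum_comm]
      have : ∀ π : Equiv.Perm (Fin n), (∑ i, g (π i) * g' (π i)) = S := by
        intro π
        exact Equiv.sum_comp π (fun x => g x * g' x)
      simp_rw [this]
      rw [Finset.sum_const, Finset.card_univ, Fintype.card_perm, Fintype.card_fin,
        nsmul_eq_mul]
    have h3 : ∑ i : Fin n, (∑ π : Equiv.Perm (Fin n), g (π i) * g' (π i))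
        = (n : ℝ) * a := by
      have : ∀ i : Fin n, (∑ π : Equiv.Perm (Fin n), g (π i) * g' (π i)) = a :=
        fun i => C_diag g g' i i0
      simp_rw [this]
      rw [Finset.sum_const, Finset.card_univ, Fintype.card_fin, nsmul_eq_mul]
    rw [← h3, hrow]
  -- (a - b) + n * b = 0
  have hab : (a - b) + (n : ℝ) * b = 0 := by
    have hrow0 : ∑ j : Fin n, (∑ π : Equiv.Perm (Fin n), g (π i0) * g' (π j)) = 0 := by
      rw [Finset.sum_comm]
      have : ∀ π : Equiv.Perm (Fin n), (∑ j, g (π i0) * g' (π j)) = 0 := by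
        intro π
        rw [← Finset.mul_sum, Equiv.sum_comp π g', hg', mul_zero]
      simp_rw [this]
      simp
    have : ∑ j : Fin n, (∑ π : Equiv.Perm (Fin n), g (π i0) * g' (π j))
        = (a - b) + (n : ℝ) * b := by
      simp_rw [hC]
      simp only [Finset.sum_add_distrib, Finset.sum_ite_eq, Finset.mem_univ, if_true,
        Finset.sum_const, Finset.card_univ, Fintype.card_fin, nsmul_eq_mul]
    rw [← this, hrow0]
  -- (n-1)(a-b) = n! S
  have key : ((n : ℝ) - 1) * (a - b) = (Nat.factorial n : ℝ) * S := by
    nlinarith [hna, hab]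
  have habT : T * (a - b) = 0 := by
    have hn1 : ((n : ℝ) - 1) ≠ 0 := by
      have : (2 : ℝ) ≤ (n : ℝ) := by exact_mod_cast hn
      linarith
    have : ((n : ℝ) - 1) * (T * (a - b)) = 0 := by
      calc ((n : ℝ) - 1) * (T * (a - b)) = T * (((n : ℝ) - 1) * (a - b)) := by ring
        _ = T * ((Nat.factorial n : ℝ) * S) := by rw [key]
        _ = (Nat.factorial n : ℝ) * (T * S) := by ring
        _ = 0 := by rw [horth, mul_zero]
    exact (mul_eq_zero.mp this).resolve_left hn1
  rw [total, habT, mul_zero]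
end

section
/- Let d1, d2 ≥ 1, m = d1 + d2, and let N : (Fin d1 → Bool) × (Fin d2 → Bool) → ℝ be a table of cell counts with total n = Σ_{(a',b')} N(a',b') > 0, all row margins equal (for every a, Σ_{b'} N(a,b') = n/2^{d1}) and all column margins equal (for every b, Σ_{a'} N(a',b) = n/2^{d2}). Define S(a,b) = Σ_{(a',b')} (−1)^{⟨a,a'⟩+⟨b,b'⟩}·N(a',b'). Then the Pearson chi-square statistic decomposes into the squared symmetry statistics over the cross interactions: Σ over all cells (a,b) of (N(a,b) − n/2^m)²/(n/2^m) = (1/n) · Σ over nonzero a and nonzero b of S(a,b)². -/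
lemma binInner_zero_left {d : ℕ} (x : Fin d → Bool) :
    binInner (fun _ => false) x = 0 := by
  simp [binInner]

lemma binInner_update_false {d : ℕ} (a z : Fin d → Bool) (k0 : Fin d) (v : Bool)
    (hz : z k0 = false) : binInner (Function.update a k0 v) z = binInner a z := by
  unfold binInner
  congr 1
  ext k
  by_cases hk : k = k0
  · subst hk; simp [hz]
  · simp [Function.update, hk]

lemma binInner_comm {d : ℕ} (a x : Fin d → Bool) : binInner a x = binInner x a := by
  unfold binInner
  congr 1
  ext k
  simp [and_comm]

lemma neg_one_pow_update {d : ℕ} (a z : Fin d → Bool) (k0 : Fin d) (hz : z k0 = true) :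
    ((-1 : ℝ)) ^ binInner (Function.update a k0 (!a k0)) z = -(-1 : ℝ) ^ binInner a z := by
  rcases Bool.eq_false_or_eq_true (a k0) with ha | ha
  swap
  · have hset : Finset.univ.filter
        (fun k => Function.update a k0 (!a k0) k = true ∧ z k = true)
        = insert k0 (Finset.univ.filter (fun k => a k = true ∧ z k = true)) := by
      ext k
      by_cases hk : k = k0
      · subst hk; simp [Function.update, ha, hz]
      · simp [Function.update, hk]
    have hnot : k0 ∉ Finset.univ.filter (fun k => a k = true ∧ z k = true) := by
      simp [ha]
    unfold binInner
    rw [hset, Finset.card_insert_of_notMem hnot, pow_succ]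
    ring
  · have hset : Finset.univ.filter (fun k => a k = true ∧ z k = true)
        = insert k0 (Finset.univ.filter
            (fun k => Function.update a k0 (!a k0) k = true ∧ z k = true)) := by
      ext k
      by_cases hk : k = k0
      · subst hk; simp [Function.update, ha, hz]
      · simp [Function.update, hk]
    have hnot : k0 ∉ Finset.univ.filter
        (fun k => Function.update a k0 (!a k0) k = true ∧ z k = true) := by
      simp [Function.update, ha]
    unfold binInner
    rw [hset, Finset.card_insert_of_notMem hnot, pow_succ]
    ring

lemma sum_char {d : ℕ} {z : Fin d → Bool} (hz : ∃ k, z k = true) :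
    ∑ a : Fin d → Bool, (-1 : ℝ) ^ binInner a z = 0 := by
  obtain ⟨k0, hk0⟩ := hz
  refine Finset.sum_involution (fun a _ => Function.update a k0 (!a k0)) ?_ ?_ ?_ ?_
  · intro a _
    rw [neg_one_pow_update a z k0 hk0]; ring
  · intro a _ _ h
    have := congrFun h k0
    simp [Function.update] at this
  · intro a _
    exact Finset.mem_univ _
  · intro a _
    ext k
    by_cases hk : k = k0
    · subst hk; simp [Function.update]
    · simp [Function.update, hk]

lemma sum_char_left {d : ℕ} {z : Fin d → Bool} (hz : ∃ k, z k = true) :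
    ∑ a : Fin d → Bool, (-1 : ℝ) ^ binInner z a = 0 := by
  have h : ∀ a : Fin d → Bool, binInner z a = binInner a z := fun a => binInner_comm z a
  simp only [h]
  exact sum_char hz

lemma orth {d : ℕ} (x y : Fin d → Bool) :
    ∑ a : Fin d → Bool, (-1 : ℝ) ^ (binInner a x + binInner a y)
      = if x = y then (2 : ℝ) ^ d else 0 := by
  split_ifs with h
  · subst h
    have h1 : ∀ a : Fin d → Bool, (-1 : ℝ) ^ (binInner a x + binInner a x) = 1 := by
      intro a; rw [← two_mul, pow_mul]; norm_num
    simp only [h1, Finset.sum_const, Finset.card_univ, nsmul_eq_mul, mul_one]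
    simp [Fintype.card_fun]
  · obtain ⟨k0, hk0⟩ : ∃ k, x k ≠ y k := by
      by_contra h'
      push_neg at h'
      exact h (funext h')
    refine Finset.sum_involution (fun a _ => Function.update a k0 (!a k0)) ?_ ?_ ?_ ?_
    · intro a _
      cases hx : x k0 <;> cases hy : y k0
      · rw [hx, hy] at hk0; exact absurd rfl hk0
      · simp only [pow_add]
        rw [binInner_update_false a x k0 _ hx, neg_one_pow_update a y k0 hy]; ring
      · simp only [pow_add]
        rw [binInner_update_false a y k0 _ hy, neg_one_pow_update a x k0 hx]; ring
      · rw [hx, hy] at hk0; exact absurd rfl hk0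
    · intro a _ _ h'
      have := congrFun h' k0
      simp [Function.update] at this
    · intro a _
      exact Finset.mem_univ _
    · intro a _
      ext k
      by_cases hk : k = k0
      · subst hk; simp [Function.update]
      · simp [Function.update, hk]

lemma sum_swap4 {α β γ δ : Type*} [Fintype α] [Fintype β] [Fintype γ] [Fintype δ]
    (f : α → β → γ → δ → ℝ) :
    ∑ a : α, ∑ b : β, ∑ c : γ, ∑ d : δ, f a b c d
      = ∑ c : γ, ∑ d : δ, ∑ a : α, ∑ b : β, f a b c d := by
  calc ∑ a : α, ∑ b : β, ∑ c : γ, ∑ d : δ, f a b c d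
      = ∑ a : α, ∑ c : γ, ∑ b : β, ∑ d : δ, f a b c d :=
        Finset.sum_congr rfl fun a _ => Finset.sum_comm
    _ = ∑ a : α, ∑ c : γ, ∑ d : δ, ∑ b : β, f a b c d :=
        Finset.sum_congr rfl fun a _ => Finset.sum_congr rfl fun c _ => Finset.sum_comm
    _ = ∑ c : γ, ∑ a : α, ∑ d : δ, ∑ b : β, f a b c d := Finset.sum_comm
    _ = ∑ c : γ, ∑ d : δ, ∑ a : α, ∑ b : β, f a b c d :=
        Finset.sum_congr rfl fun c _ => Finset.sum_comm

lemma parseval {d1 d2 : ℕ} (N : (Fin d1 → Bool) × (Fin d2 → Bool) → ℝ) :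
    ∑ a : Fin d1 → Bool, ∑ b : Fin d2 → Bool,
      (∑ c : (Fin d1 → Bool) × (Fin d2 → Bool),
        (-1 : ℝ) ^ (binInner a c.1 + binInner b c.2) * N c) ^ 2
    = 2 ^ (d1 + d2) * ∑ c : (Fin d1 → Bool) × (Fin d2 → Bool), (N c) ^ 2 := by
  have step1 : ∀ (a : Fin d1 → Bool) (b : Fin d2 → Bool),
      (∑ c : (Fin d1 → Bool) × (Fin d2 → Bool),
        (-1 : ℝ) ^ (binInner a c.1 + binInner b c.2) * N c) ^ 2
      = ∑ c : (Fin d1 → Bool) × (Fin d2 → Bool),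
          ∑ c' : (Fin d1 → Bool) × (Fin d2 → Bool),
            ((-1 : ℝ) ^ (binInner a c.1 + binInner a c'.1)
              * (-1 : ℝ) ^ (binInner b c.2 + binInner b c'.2)) * (N c * N c') := by
    intro a b
    rw [sq, Finset.sum_mul_sum]
    refine Finset.sum_congr rfl fun c _ => Finset.sum_congr rfl fun c' _ => ?_
    rw [pow_add, pow_add, pow_add, pow_add]
    ring
  simp only [step1]
  refine (sum_swap4 _).trans ?_
  have inner : ∀ c c' : (Fin d1 → Bool) × (Fin d2 → Bool),
      ∑ a : Fin d1 → Bool, ∑ b : Fin d2 → Bool,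
        ((-1 : ℝ) ^ (binInner a c.1 + binInner a c'.1)
          * (-1 : ℝ) ^ (binInner b c.2 + binInner b c'.2)) * (N c * N c')
      = (if c = c' then (2 : ℝ) ^ (d1 + d2) else 0) * (N c * N c') := by
    intro c c'
    have e1 : ∑ a : Fin d1 → Bool, ∑ b : Fin d2 → Bool,
        ((-1 : ℝ) ^ (binInner a c.1 + binInner a c'.1)
          * (-1 : ℝ) ^ (binInner b c.2 + binInner b c'.2)) * (N c * N c')
        = ((∑ a : Fin d1 → Bool, (-1 : ℝ) ^ (binInner a c.1 + binInner a c'.1))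
            * (∑ b : Fin d2 → Bool, (-1 : ℝ) ^ (binInner b c.2 + binInner b c'.2)))
            * (N c * N c') := by
      rw [Finset.sum_mul_sum, Finset.sum_mul]
      exact Finset.sum_congr rfl fun a _ => (Finset.sum_mul _ _ _).symm
    rw [e1, orth, orth]
    by_cases h1 : c.1 = c'.1 <;> by_cases h2 : c.2 = c'.2 <;>
      simp [Prod.ext_iff, h1, h2, pow_add]
  simp only [inner]
  rw [Finset.mul_sum]
  refine Finset.sum_congr rfl fun c _ => ?_
  simp only [ite_mul, zero_mul]
  rw [Finset.sum_ite_eq]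
  simp only [Finset.mem_univ, if_true]
  ring

lemma filter_not_exists {d : ℕ} :
    Finset.univ.filter (fun a : Fin d → Bool => ¬ ∃ k, a k = true)
      = {fun _ => false} := by
  ext a
  simp [funext_iff]

lemma split_exists {d : ℕ} (f : (Fin d → Bool) → ℝ) :
    ∑ a : Fin d → Bool, f a
      = (∑ a ∈ Finset.univ.filter (fun a => ∃ k, a k = true), f a) + f (fun _ => false) := by
  rw [← Finset.sum_filter_add_sum_filter_not Finset.univ (fun a => ∃ k, a k = true) f,
    filter_not_exists, Finset.sum_singleton]

/-- Orthogonal decomposition of the Pearson chi-square statistic: for a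
`2^d1 × 2^d2` contingency table `N` with total count `n > 0` and equal row and
column margins, the chi-square statistic equals `(1/n)` times the sum of the squared
symmetry statistics `S(a,b)` over the cross interactions (nonzero `a` and nonzero `b`). -/
theorem chi_square_decomposition {d1 d2 : ℕ} (hd1 : 1 ≤ d1) (hd2 : 1 ≤ d2)
    (N : (Fin d1 → Bool) × (Fin d2 → Bool) → ℝ) (n : ℝ)
    (hn : n = ∑ c : (Fin d1 → Bool) × (Fin d2 → Bool), N c) (hpos : 0 < n)
    (hrow : ∀ a : Fin d1 → Bool, (∑ b' : Fin d2 → Bool, N (a, b')) = n / 2 ^ d1)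
    (hcol : ∀ b : Fin d2 → Bool, (∑ a' : Fin d1 → Bool, N (a', b)) = n / 2 ^ d2) :
    (∑ c : (Fin d1 → Bool) × (Fin d2 → Bool),
        (N c - n / 2 ^ (d1 + d2)) ^ 2 / (n / 2 ^ (d1 + d2))) =
      (1 / n) *
        ∑ a ∈ Finset.univ.filter (fun a : Fin d1 → Bool => ∃ k, a k = true),
          ∑ b ∈ Finset.univ.filter (fun b : Fin d2 → Bool => ∃ k, b k = true),
            (∑ c : (Fin d1 → Bool) × (Fin d2 → Bool),
              (-1 : ℝ) ^ (binInner a c.1 + binInner b c.2) * N c) ^ 2 := by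
  classical
  have hn0 : n ≠ 0 := ne_of_gt hpos
  have h2 : ((2 : ℝ)) ^ (d1 + d2) ≠ 0 := by positivity
  have hcard : ((Fintype.card ((Fin d1 → Bool) × (Fin d2 → Bool)) : ℕ) : ℝ)
      = 2 ^ (d1 + d2) := by
    simp [Fintype.card_prod, Fintype.card_fun, pow_add]
  -- margin facts
  have hFa0 : ∀ a : Fin d1 → Bool, (∃ k, a k = true) →
      (∑ c : (Fin d1 → Bool) × (Fin d2 → Bool),
        (-1 : ℝ) ^ (binInner a c.1 + binInner (fun _ => false) c.2) * N c) = 0 := by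
    intro a ha
    rw [Fintype.sum_prod_type]
    have h : ∀ x : Fin d1 → Bool,
        ∑ y : Fin d2 → Bool,
          (-1 : ℝ) ^ (binInner a x + binInner (fun _ => false) y) * N (x, y)
        = (-1 : ℝ) ^ (binInner a x) * (n / 2 ^ d1) := by
      intro x
      simp only [binInner_zero_left, add_zero]
      rw [← Finset.mul_sum, hrow x]
    rw [Finset.sum_congr rfl fun x _ => h x, ← Finset.sum_mul, sum_char_left ha, zero_mul]
  have hF0b : ∀ b : Fin d2 → Bool, (∃ k, b k = true) →
      (∑ c : (Fin d1 → Bool) × (Fin d2 → Bool),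
        (-1 : ℝ) ^ (binInner (fun _ => false) c.1 + binInner b c.2) * N c) = 0 := by
    intro b hb
    rw [Fintype.sum_prod_type, Finset.sum_comm]
    have h : ∀ y : Fin d2 → Bool,
        ∑ x : Fin d1 → Bool,
          (-1 : ℝ) ^ (binInner (fun _ => false) x + binInner b y) * N (x, y)
        = (-1 : ℝ) ^ (binInner b y) * (n / 2 ^ d2) := by
      intro y
      simp only [binInner_zero_left, zero_add]
      rw [← Finset.mul_sum, hcol y]
    rw [Finset.sum_congr rfl fun y _ => h y, ← Finset.sum_mul, sum_char_left hb, zero_mul]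
  have hF00 : (∑ c : (Fin d1 → Bool) × (Fin d2 → Bool),
      (-1 : ℝ) ^ (binInner (fun _ => false) c.1 + binInner (fun _ => false) c.2) * N c)
      = n := by
    simp only [binInner_zero_left, add_zero, pow_zero, one_mul]
    exact hn.symm
  -- decomposition of the full double sum
  have hdecomp : ∑ a : Fin d1 → Bool, ∑ b : Fin d2 → Bool,
      (∑ c : (Fin d1 → Bool) × (Fin d2 → Bool),
        (-1 : ℝ) ^ (binInner a c.1 + binInner b c.2) * N c) ^ 2
      = (∑ a ∈ Finset.univ.filter (fun a : Fin d1 → Bool => ∃ k, a k = true),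
          ∑ b ∈ Finset.univ.filter (fun b : Fin d2 → Bool => ∃ k, b k = true),
            (∑ c : (Fin d1 → Bool) × (Fin d2 → Bool),
              (-1 : ℝ) ^ (binInner a c.1 + binInner b c.2) * N c) ^ 2) + n ^ 2 := by
    rw [split_exists (fun a => ∑ b : Fin d2 → Bool,
      (∑ c : (Fin d1 → Bool) × (Fin d2 → Bool),
        (-1 : ℝ) ^ (binInner a c.1 + binInner b c.2) * N c) ^ 2)]
    have h0 : ∑ b : Fin d2 → Bool,
        (∑ c : (Fin d1 → Bool) × (Fin d2 → Bool),
          (-1 : ℝ) ^ (binInner (fun _ => false) c.1 + binInner b c.2) * N c) ^ 2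
        = n ^ 2 := by
      rw [split_exists (fun b =>
        (∑ c : (Fin d1 → Bool) × (Fin d2 → Bool),
          (-1 : ℝ) ^ (binInner (fun _ => false) c.1 + binInner b c.2) * N c) ^ 2)]
      have hz : ∑ b ∈ Finset.univ.filter (fun b : Fin d2 → Bool => ∃ k, b k = true),
          (∑ c : (Fin d1 → Bool) × (Fin d2 → Bool),
            (-1 : ℝ) ^ (binInner (fun _ => false) c.1 + binInner b c.2) * N c) ^ 2
          = 0 := by
        refine Finset.sum_eq_zero fun b hb => ?_
        rw [hF0b b (Finset.mem_filter.mp hb).2]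
        ring
      rw [hz, zero_add, hF00]
    rw [h0]
    congr 1
    refine Finset.sum_congr rfl fun a ha => ?_
    rw [split_exists (fun b =>
      (∑ c : (Fin d1 → Bool) × (Fin d2 → Bool),
        (-1 : ℝ) ^ (binInner a c.1 + binInner b c.2) * N c) ^ 2)]
    rw [hFa0 a (Finset.mem_filter.mp ha).2]
    norm_num
  -- value of the filtered sum
  have hS : (∑ a ∈ Finset.univ.filter (fun a : Fin d1 → Bool => ∃ k, a k = true),
      ∑ b ∈ Finset.univ.filter (fun b : Fin d2 → Bool => ∃ k, b k = true),
        (∑ c : (Fin d1 → Bool) × (Fin d2 → Bool),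
          (-1 : ℝ) ^ (binInner a c.1 + binInner b c.2) * N c) ^ 2)
      = 2 ^ (d1 + d2) * (∑ c : (Fin d1 → Bool) × (Fin d2 → Bool), (N c) ^ 2) - n ^ 2 := by
    have hp := parseval N
    rw [hdecomp] at hp
    linarith
  -- left-hand side
  have hLHS : (∑ c : (Fin d1 → Bool) × (Fin d2 → Bool),
      (N c - n / 2 ^ (d1 + d2)) ^ 2 / (n / 2 ^ (d1 + d2)))
      = 2 ^ (d1 + d2) / n * (∑ c : (Fin d1 → Bool) × (Fin d2 → Bool), (N c) ^ 2) - n := by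
    have hterm : ∀ c : (Fin d1 → Bool) × (Fin d2 → Bool),
        (N c - n / 2 ^ (d1 + d2)) ^ 2 / (n / 2 ^ (d1 + d2))
        = 2 ^ (d1 + d2) / n * (N c) ^ 2 - 2 * N c + n / 2 ^ (d1 + d2) := by
      intro c
      field_simp
      ring
    rw [Finset.sum_congr rfl fun c _ => hterm c, Finset.sum_add_distrib,
      Finset.sum_sub_distrib, ← Finset.mul_sum, ← Finset.mul_sum, Finset.sum_const,
      Finset.card_univ, nsmul_eq_mul, hcard, ← hn]
    field_simp
    ring
  rw [hLHS, hS]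
  field_simp
end
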